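/- arXiv:1406.2597 — 4 statements merged into one kernel-verified Lean document; each statement's English description precedes it below -/
import Mathlib

section
/- If A, B ⊆ ℕ are disjoint and A has asymptotic density, then d̲_∞(A ∪ B) = d(A) + d̲_∞(B). -/
open Filter Topology

noncomputable section

/-- The space `ℓ∞` of bounded real sequences. -/
abbrev EllInfty : Type := lp (fun _ : ℕ => ℝ) ⊤

/-- The characteristic sequence of a set `A ⊆ ℕ` (as a plain function). -/
def chiFun (A : Set ℕ) : ℕ → ℝ := A.indicator 1

lemma chiFun_memℓp (A : Set ℕ) : Memℓp (chiFun A) ⊤ := by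
  apply memℓp_infty
  refine ⟨1, ?_⟩
  rintro r ⟨n, rfl⟩
  by_cases h : n ∈ A <;> simp [chiFun, Set.indicator, h]

/-- The characteristic sequence of a set `A ⊆ ℕ` as an element of `ℓ∞`. -/
def chi (A : Set ℕ) : EllInfty := ⟨chiFun A, chiFun_memℓp A⟩

/-- `A(n) = |A ∩ {1,…,n}|` (as a real number). -/
def count (A : Set ℕ) (n : ℕ) : ℝ := ∑ k ∈ Finset.Icc 1 n, chiFun A k

/-- `A` has asymptotic density `d`, i.e. `A(n)/n → d`. -/
def HasDensity (A : Set ℕ) (d : ℝ) : Prop :=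
  Tendsto (fun n => count A n / n) atTop (𝓝 d)

/-- A density measure: a finitely additive measure `μ : 𝒫(ℕ) → [0,1]` with `μ(ℕ) = 1`
which extends the asymptotic density. -/
def IsDensityMeasure (μ : Set ℕ → ℝ) : Prop :=
  (∀ A B : Set ℕ, Disjoint A B → μ (A ∪ B) = μ A + μ B) ∧
  (∀ A : Set ℕ, μ A ∈ Set.Icc (0 : ℝ) 1) ∧
  μ Set.univ = 1 ∧
  (∀ A d, HasDensity A d → μ A = d)

/-- The sequence of Cesàro averages `(x₁ + … + xₙ)/n`. -/
def cesaroAvg (x : ℕ → ℝ) (n : ℕ) : ℝ := (∑ i ∈ Finset.Icc 1 n, x i) / n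

/-- `x` has Cesàro mean `c`. -/
def HasCesaro (x : ℕ → ℝ) (c : ℝ) : Prop := Tendsto (cesaroAvg x) atTop (𝓝 c)

/-- A functional on `ℓ∞` is positive if it is nonnegative on nonnegative sequences. -/
def IsPositiveFunctional (f : EllInfty → ℝ) : Prop :=
  ∀ x : EllInfty, (∀ n, 0 ≤ x n) → 0 ≤ f x

/-- A functional on `ℓ∞` extends the Cesàro mean. -/
def ExtendsCesaro (f : EllInfty → ℝ) : Prop :=
  ∀ (x : EllInfty) (c : ℝ), HasCesaro (⇑x) c → f x = c

/-- The set of positive continuous linear functionals on `ℓ∞` extending the Cesàro mean. -/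
def Cesex : Set (EllInfty →L[ℝ] ℝ) :=
  {f | IsPositiveFunctional f ∧ ExtendsCesaro f}

/-- `f_C(x) = sup { f(x) : f ∈ Cesex }`. -/
def fC (x : EllInfty) : ℝ := sSup ((fun f : EllInfty →L[ℝ] ℝ => f x) '' Cesex)

/-- `Θ_{θ,n}(x) = (Σ_{θn < i ≤ n} x_i) / (n(1-θ))`. -/
def Theta (x : ℕ → ℝ) (θ : ℝ) (n : ℕ) : ℝ :=
  (∑ i ∈ Finset.Icc 1 n, if θ * n < (i : ℝ) then x i else 0) / (n * (1 - θ))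

/-- `Θ_θ(x) = limsup_{n → ∞} Θ_{θ,n}(x)`. -/
def ThetaSup (x : ℕ → ℝ) (θ : ℝ) : ℝ := limsup (Theta x θ) atTop

/-- `t(x) = lim_{θ → 1⁻} Θ_θ(x)`. -/
def tFun (x : ℕ → ℝ) : ℝ := limUnder (𝓝[<] (1 : ℝ)) (ThetaSup x)

/-- `A_α(n) = Σ_{k ∈ A, k ≤ n} k^α`. -/
def aSum (A : Set ℕ) (α : ℝ) (n : ℕ) : ℝ :=
  ∑ k ∈ Finset.Icc 1 n, chiFun A k * (k : ℝ) ^ α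

/-- The upper `α`-density `d̄_α(A) = limsup_{n→∞} A_α(n)/ℕ_α(n)`. -/
def upperADens (A : Set ℕ) (α : ℝ) : ℝ :=
  limsup (fun n => aSum A α n / aSum Set.univ α n) atTop

/-- The lower `α`-density `d̲_α(A) = liminf_{n→∞} A_α(n)/ℕ_α(n)`. -/
def lowerADens (A : Set ℕ) (α : ℝ) : ℝ :=
  liminf (fun n => aSum A α n / aSum Set.univ α n) atTop

/-- `d̄_∞(A) = lim_{α→∞} d̄_α(A)`. -/
def dInftyUpper (A : Set ℕ) : ℝ := limUnder (atTop : Filter ℝ) (upperADens A)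

/-- `d̲_∞(A) = lim_{α→∞} d̲_α(A)`. -/
def dInftyLower (A : Set ℕ) : ℝ := limUnder (atTop : Filter ℝ) (lowerADens A)

/-- The quotient `(A(n) - A(⌊θn⌋))/(n - θn)` appearing in the Pólya density. -/
def polyaQuot (A : Set ℕ) (θ : ℝ) (n : ℕ) : ℝ :=
  (count A n - count A ⌊θ * n⌋₊) / (n - θ * n)

/-- The upper Pólya density `p̄(A)`. -/
def pUpper (A : Set ℕ) : ℝ :=
  limUnder (𝓝[<] (1 : ℝ)) (fun θ => limsup (polyaQuot A θ) atTop)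

/-- The lower Pólya density `p̲(A)`. -/
def pLower (A : Set ℕ) : ℝ :=
  limUnder (𝓝[<] (1 : ℝ)) (fun θ => liminf (polyaQuot A θ) atTop)

/-- `λ̄(A) = sup { μ(A) : μ a density measure }`. -/
def lamUpper (A : Set ℕ) : ℝ := sSup {r | ∃ μ, IsDensityMeasure μ ∧ μ A = r}

/-- `λ̲(A) = inf { μ(A) : μ a density measure }`. -/
def lamLower (A : Set ℕ) : ℝ := sInf {r | ∃ μ, IsDensityMeasure μ ∧ μ A = r}

/-- `d̄*(A) = inf { d(B) : B ⊇ A, B ∈ 𝒟 }`. -/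
def dUpperStar (A : Set ℕ) : ℝ := sInf {r | ∃ B, A ⊆ B ∧ HasDensity B r}

/-- `d̲*(A) = sup { d(B) : B ⊆ A, B ∈ 𝒟 }`. -/
def dLowerStar (A : Set ℕ) : ℝ := sSup {r | ∃ B, B ⊆ A ∧ HasDensity B r}

/-- The `ℱ`-limit of a (bounded) real sequence along an ultrafilter `ℱ`:
the unique `L` with `Tendsto x ℱ (𝓝 L)` (when it exists). -/
def ulim (F : Ultrafilter ℕ) (x : ℕ → ℝ) : ℝ := limUnder (F : Filter ℕ) x

/-- An ultrafilter is free (non-principal) iff it contains all cofinite sets. -/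
def IsFreeUltrafilter (F : Ultrafilter ℕ) : Prop := (F : Filter ℕ) ≤ Filter.cofinite

/-- The set of positive functionals extending Cesàro mean, inside the weak-* dual of `ℓ∞`. -/
def CesexW : Set (WeakDual ℝ EllInfty) :=
  {f | (∀ x : EllInfty, (∀ n, 0 ≤ x n) → 0 ≤ f x) ∧
    ∀ (x : EllInfty) (c : ℝ), HasCesaro (⇑x) c → f x = c}

lemma chiFun_nonneg (A : Set ℕ) (k : ℕ) : 0 ≤ chiFun A k :=
  Set.indicator_nonneg (fun _ _ => zero_le_one) k

lemma chiFun_le_one (A : Set ℕ) (k : ℕ) : chiFun A k ≤ 1 := by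
  by_cases h : k ∈ A <;> simp [chiFun, Set.indicator, h]

lemma chiFun_univ (k : ℕ) : chiFun Set.univ k = 1 := by simp [chiFun]

lemma count_zero (A : Set ℕ) : count A 0 = 0 := by simp [count]

lemma count_succ (A : Set ℕ) (n : ℕ) : count A (n+1) = count A n + chiFun A (n+1) := by
  simp [count, Finset.sum_Icc_succ_top (Nat.one_le_iff_ne_zero.mpr (Nat.succ_ne_zero n))]

lemma count_univ (n : ℕ) : count Set.univ n = n := by
  induction n with
  | zero => simp [count]
  | succ n ih => rw [count_succ, ih, chiFun_univ]; push_cast; ring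

lemma abel_identity (a g F : ℕ → ℝ) (hF0 : F 0 = 0)
    (hF : ∀ n, F (n+1) = F n + a (n+1)) (n : ℕ) :
    ∑ k ∈ Finset.Icc 1 n, a k * g k
      = F n * g (n+1) - ∑ k ∈ Finset.Icc 1 n, F k * (g (k+1) - g k) := by
  induction n with
  | zero => simp [hF0]
  | succ n ih =>
    rw [Finset.sum_Icc_succ_top (by omega), Finset.sum_Icc_succ_top (by omega), ih, hF n]
    ring

lemma aSum_zero (A : Set ℕ) (α : ℝ) : aSum A α 0 = 0 := by simp [aSum]

lemma aSum_succ (A : Set ℕ) (α : ℝ) (n : ℕ) :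
    aSum A α (n+1) = aSum A α n + chiFun A (n+1) * ((n+1 : ℕ) : ℝ) ^ α := by
  simp [aSum, Finset.sum_Icc_succ_top (by omega : 1 ≤ n + 1)]

lemma aSum_nonneg (A : Set ℕ) (α : ℝ) (n : ℕ) : 0 ≤ aSum A α n := by
  refine Finset.sum_nonneg fun k hk => mul_nonneg (chiFun_nonneg A k) ?_
  have : (0:ℝ) < k := by
    have := (Finset.mem_Icc.mp hk).1; positivity
  exact (Real.rpow_pos_of_pos this α).le

lemma aSum_le_univ (A : Set ℕ) (α : ℝ) (n : ℕ) : aSum A α n ≤ aSum Set.univ α n := by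
  refine Finset.sum_le_sum fun k hk => ?_
  have hk1 := (Finset.mem_Icc.mp hk).1
  have : (0:ℝ) < k := by positivity
  rw [chiFun_univ, one_mul]
  exact mul_le_of_le_one_left (Real.rpow_pos_of_pos this α).le (chiFun_le_one A k)

lemma aSum_union (A B : Set ℕ) (hAB : Disjoint A B) (α : ℝ) (n : ℕ) :
    aSum (A ∪ B) α n = aSum A α n + aSum B α n := by
  rw [aSum, aSum, aSum, ← Finset.sum_add_distrib]
  refine Finset.sum_congr rfl fun k _ => ?_
  have : chiFun (A ∪ B) k = chiFun A k + chiFun B k := by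
    rw [chiFun, chiFun, chiFun, Set.indicator_union_of_disjoint hAB]
  rw [this, add_mul]

lemma abel_I1 (A : Set ℕ) (β : ℝ) (n : ℕ) :
    aSum A β n = count A n * ((n+1 : ℕ) : ℝ) ^ β
      - ∑ k ∈ Finset.Icc 1 n, count A k * (((k+1 : ℕ) : ℝ) ^ β - ((k : ℕ) : ℝ) ^ β) :=
  abel_identity (chiFun A) (fun k => (k : ℝ) ^ β) (count A) (count_zero A) (count_succ A) n

lemma abel_I2 (A : Set ℕ) (β γ : ℝ) (n : ℕ) :
    aSum A (β + γ) n = aSum A β n * ((n+1 : ℕ) : ℝ) ^ γ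
      - ∑ k ∈ Finset.Icc 1 n, aSum A β k * (((k+1 : ℕ) : ℝ) ^ γ - ((k : ℕ) : ℝ) ^ γ) := by
  have h := abel_identity (fun k => chiFun A k * (k : ℝ) ^ β) (fun k => (k : ℝ) ^ γ)
    (aSum A β) (aSum_zero A β) (aSum_succ A β) n
  rw [← h, aSum]
  refine Finset.sum_congr rfl fun k hk => ?_
  have hk1 := (Finset.mem_Icc.mp hk).1
  have hk0 : (0:ℝ) < k := by positivity
  rw [Real.rpow_add hk0]; ring

lemma nSum_ge (α : ℝ) (hα : 0 ≤ α) (n : ℕ) : (n : ℝ) ≤ aSum Set.univ α n := by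
  have : ∀ k ∈ Finset.Icc 1 n, (1:ℝ) ≤ chiFun Set.univ k * (k : ℝ) ^ α := by
    intro k hk
    have hk1 := (Finset.mem_Icc.mp hk).1
    have h1k : (1:ℝ) ≤ (k:ℝ) := by exact_mod_cast hk1
    rw [chiFun_univ, one_mul]
    calc (1:ℝ) = (1:ℝ) ^ α := (Real.one_rpow α).symm
    _ ≤ (k:ℝ) ^ α := Real.rpow_le_rpow zero_le_one h1k hα
  calc (n:ℝ) = ∑ _k ∈ Finset.Icc 1 n, (1:ℝ) := by simp
  _ ≤ _ := Finset.sum_le_sum this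

lemma nSum_pos (α : ℝ) {n : ℕ} (hn : 1 ≤ n) : 0 < aSum Set.univ α n := by
  have h1 : (1:ℕ) ∈ Finset.Icc 1 n := Finset.mem_Icc.mpr ⟨le_refl 1, hn⟩
  refine Finset.sum_pos' (fun k hk => ?_) ⟨1, h1, ?_⟩
  · have hk1 := (Finset.mem_Icc.mp hk).1
    have : (0:ℝ) < k := by positivity
    exact mul_nonneg (chiFun_nonneg _ k) (Real.rpow_pos_of_pos this α).le
  · rw [chiFun_univ, one_mul]
    exact Real.rpow_pos_of_pos (by norm_num) α

lemma nSum_tendsto (α : ℝ) (hα : 0 ≤ α) :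
    Tendsto (fun n => aSum Set.univ α n) atTop atTop :=
  tendsto_atTop_mono (nSum_ge α hα) tendsto_natCast_atTop_atTop

lemma nSum_lower (β : ℝ) (hβ : 0 ≤ β) {n : ℕ} (hn : 1 ≤ n) :
    (n : ℝ) * ((n+1 : ℕ) : ℝ) ^ β ≤ (2 * (2:ℝ) ^ β * (2:ℝ) ^ β) * aSum Set.univ β n := by
  set m : ℕ := n / 2 + 1 with hm
  have hmn : m ≤ n := by omega
  have hhalf : (n : ℝ) / 2 ≤ (m : ℝ) := by
    have : n ≤ 2 * m := by omega
    have : (n:ℝ) ≤ 2 * m := by exact_mod_cast this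
    linarith
  have hcard : (n : ℝ) / 2 ≤ ((n + 1 - m : ℕ) : ℝ) := by
    have : n ≤ 2 * (n + 1 - m) := by omega
    have : (n:ℝ) ≤ 2 * ((n + 1 - m : ℕ) : ℝ) := by exact_mod_cast this
    linarith
  have hterm : ∀ k ∈ Finset.Icc m n, ((n:ℝ)/2) ^ β ≤ chiFun Set.univ k * (k:ℝ) ^ β := by
    intro k hk
    have hk1 := (Finset.mem_Icc.mp hk).1
    have hkm : (m:ℝ) ≤ (k:ℝ) := by exact_mod_cast hk1
    rw [chiFun_univ, one_mul]
    exact Real.rpow_le_rpow (by positivity) (le_trans hhalf hkm) hβ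
  have hsub : ∑ k ∈ Finset.Icc m n, chiFun Set.univ k * (k:ℝ) ^ β ≤ aSum Set.univ β n := by
    refine Finset.sum_le_sum_of_subset_of_nonneg (Finset.Icc_subset_Icc (by omega) le_rfl)
      (fun k hk _ => ?_)
    have hk1 := (Finset.mem_Icc.mp hk).1
    have : (0:ℝ) < k := by positivity
    exact mul_nonneg (chiFun_nonneg _ k) (Real.rpow_pos_of_pos this β).le
  have hlow : ((n:ℝ)/2) * ((n:ℝ)/2) ^ β ≤ aSum Set.univ β n := by
    calc ((n:ℝ)/2) * ((n:ℝ)/2) ^ β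
        ≤ ((n + 1 - m : ℕ) : ℝ) * ((n:ℝ)/2) ^ β := by
          refine mul_le_mul_of_nonneg_right hcard (by positivity)
    _ = ∑ _k ∈ Finset.Icc m n, ((n:ℝ)/2) ^ β := by
          rw [Finset.sum_const, Nat.card_Icc, nsmul_eq_mul]
    _ ≤ ∑ k ∈ Finset.Icc m n, chiFun Set.univ k * (k:ℝ) ^ β := Finset.sum_le_sum hterm
    _ ≤ aSum Set.univ β n := hsub
  have hup : (n : ℝ) * ((n+1 : ℕ) : ℝ) ^ β ≤ (2:ℝ)^β * (2:ℝ)^β * (2 * (((n:ℝ)/2) * ((n:ℝ)/2) ^ β)) := by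
    have hn1 : (1:ℝ) ≤ (n:ℝ) := by exact_mod_cast hn
    have h2n : ((n+1:ℕ):ℝ) ≤ 2 * (n:ℝ) := by push_cast; linarith
    have e1 : ((n+1:ℕ):ℝ) ^ β ≤ (2 * (n:ℝ)) ^ β :=
      Real.rpow_le_rpow (by positivity) h2n hβ
    have e2 : (2 * (n:ℝ)) ^ β = (2:ℝ)^β * (n:ℝ)^β := Real.mul_rpow (by norm_num) (by positivity)
    have e3 : (n:ℝ)^β = (2:ℝ)^β * ((n:ℝ)/2)^β := by
      rw [← Real.mul_rpow (by norm_num) (by positivity)]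
      congr 1
      field_simp
    calc (n : ℝ) * ((n+1 : ℕ) : ℝ) ^ β ≤ (n:ℝ) * ((2:ℝ)^β * (n:ℝ)^β) := by
          rw [← e2]; exact mul_le_mul_of_nonneg_left e1 (by positivity)
    _ = (2:ℝ)^β * (2:ℝ)^β * (2 * (((n:ℝ)/2) * ((n:ℝ)/2) ^ β)) := by rw [e3]; ring
  have h2 : (0:ℝ) < (2:ℝ)^β * (2:ℝ)^β := by positivity
  calc (n : ℝ) * ((n+1 : ℕ) : ℝ) ^ β
      ≤ (2:ℝ)^β * (2:ℝ)^β * (2 * (((n:ℝ)/2) * ((n:ℝ)/2) ^ β)) := hup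
  _ ≤ (2:ℝ)^β * (2:ℝ)^β * (2 * aSum Set.univ β n) := by
        refine mul_le_mul_of_nonneg_left ?_ h2.le
        linarith [hlow]
  _ = (2 * (2:ℝ) ^ β * (2:ℝ) ^ β) * aSum Set.univ β n := by ring

lemma count_nonneg (A : Set ℕ) (n : ℕ) : 0 ≤ count A n :=
  Finset.sum_nonneg fun k _ => chiFun_nonneg A k

lemma count_le (A : Set ℕ) (n : ℕ) : count A n ≤ n := by
  calc count A n ≤ ∑ _k ∈ Finset.Icc 1 n, (1:ℝ) := Finset.sum_le_sum fun k _ => chiFun_le_one A k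
  _ = n := by simp

lemma density_count_bound {A : Set ℕ} {d : ℝ} (hd : HasDensity A d) {ε : ℝ} (hε : 0 < ε) :
    ∃ C : ℝ, 0 ≤ C ∧ ∀ k : ℕ, |count A k - d * k| ≤ ε * k + C := by
  have h := (Metric.tendsto_atTop.mp hd) ε hε
  obtain ⟨K, hK⟩ := h
  refine ⟨(K + 1) * (1 + |d|), by positivity, fun k => ?_⟩
  rcases le_or_gt (K + 1) k with hk | hk
  · have hk1 : 1 ≤ k := by omega
    have hk0 : (0:ℝ) < k := by exact_mod_cast hk1
    have := hK k (by omega)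
    rw [Real.dist_eq] at this
    have : |count A k / k - d| ≤ ε := this.le
    have h2 : |count A k - d * k| = |count A k / k - d| * k := by
      rw [← abs_of_pos hk0, ← abs_mul]
      congr 1
      field_simp
      rw [abs_of_pos hk0]; ring
    rw [h2]
    have : |count A k / k - d| * (k:ℝ) ≤ ε * k := mul_le_mul_of_nonneg_right this hk0.le
    have hpos : (0:ℝ) ≤ (K + 1) * (1 + |d|) := by positivity
    linarith
  · have hck : |count A k - d * k| ≤ (k:ℝ) + |d| * k := by
      have h1 : |count A k - d * k| ≤ |count A k| + |d * k| := abs_sub _ _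
      have h2 : |count A k| = count A k := abs_of_nonneg (count_nonneg A k)
      have h3 : |d * k| = |d| * k := by rw [abs_mul, Nat.abs_cast]
      have := count_le A k
      linarith
    have hkK : (k:ℝ) ≤ (K+1:ℝ) := by exact_mod_cast hk.le
    have hk0 : (0:ℝ) ≤ k := Nat.cast_nonneg k
    have hεk : (0:ℝ) ≤ ε * k := by positivity
    have : (k:ℝ) + |d| * k ≤ (K + 1) * (1 + |d|) := by
      have h4 : |d| * k ≤ |d| * (K+1) := mul_le_mul_of_nonneg_left hkK (abs_nonneg d)
      nlinarith [abs_nonneg d]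
    linarith

lemma sum_delta (β : ℝ) (n : ℕ) :
    ∑ k ∈ Finset.Icc 1 n, (((k+1 : ℕ) : ℝ) ^ β - ((k : ℕ) : ℝ) ^ β)
      = ((n+1 : ℕ) : ℝ) ^ β - 1 := by
  induction n with
  | zero => simp
  | succ n ih => rw [Finset.sum_Icc_succ_top (by omega), ih]; ring

lemma delta_nonneg (β : ℝ) (hβ : 0 ≤ β) (k : ℕ) (hk : 1 ≤ k) :
    0 ≤ ((k+1 : ℕ) : ℝ) ^ β - ((k : ℕ) : ℝ) ^ β := by
  have : ((k:ℕ):ℝ) ≤ ((k+1:ℕ):ℝ) := by push_cast; linarith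
  have := Real.rpow_le_rpow (by positivity) this hβ
  linarith

lemma sum_kdelta (β : ℝ) (n : ℕ) :
    ∑ k ∈ Finset.Icc 1 n, (k:ℝ) * (((k+1 : ℕ) : ℝ) ^ β - ((k : ℕ) : ℝ) ^ β)
      = (n:ℝ) * ((n+1 : ℕ) : ℝ) ^ β - aSum Set.univ β n := by
  have h := abel_I1 Set.univ β n
  rw [count_univ] at h
  have e : ∑ k ∈ Finset.Icc 1 n, count Set.univ k * (((k+1:ℕ):ℝ)^β - ((k:ℕ):ℝ)^β)
      = ∑ k ∈ Finset.Icc 1 n, (k:ℝ) * (((k+1:ℕ):ℝ)^β - ((k:ℕ):ℝ)^β) :=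
    Finset.sum_congr rfl fun k _ => by rw [count_univ]
  rw [e] at h
  linarith

lemma tendsto_of_abs_le (f : ℕ → ℝ) (d : ℝ)
    (h : ∀ ε > (0:ℝ), ∀ᶠ n in atTop, |f n - d| ≤ ε) : Tendsto f atTop (𝓝 d) := by
  rw [Metric.tendsto_atTop]
  intro ε hε
  obtain ⟨N, hN⟩ := eventually_atTop.mp (h (ε/2) (by linarith))
  exact ⟨N, fun n hn => by rw [Real.dist_eq]; linarith [hN n hn]⟩

lemma tendsto_ratio {A : Set ℕ} {d : ℝ} (hd : HasDensity A d) {β : ℝ} (hβ : 0 ≤ β) :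
    Tendsto (fun n => aSum A β n / aSum Set.univ β n) atTop (𝓝 d) := by
  set Cb : ℝ := 2 * (2:ℝ) ^ β * (2:ℝ) ^ β with hCb
  have hCbpos : 0 < Cb := by positivity
  refine tendsto_of_abs_le _ _ fun ε0 hε0 => ?_
  set ε : ℝ := ε0 / (4 * Cb) with hεdef
  have hε : 0 < ε := by positivity
  obtain ⟨C, hC0, hC⟩ := density_count_bound hd hε
  have hsmall : ∀ᶠ n : ℕ in atTop, 2 * C * Cb / (n:ℝ) ≤ ε0 / 2 := by
    have ht : Tendsto (fun n : ℕ => 2 * C * Cb / (n:ℝ)) atTop (𝓝 0) :=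
      Tendsto.div_atTop tendsto_const_nhds tendsto_natCast_atTop_atTop
    exact ht.eventually (by
      have : Set.Iic (ε0/2) ∈ 𝓝 (0:ℝ) := Iic_mem_nhds (by linarith)
      exact eventually_of_mem this fun x hx => hx)
  filter_upwards [hsmall, eventually_ge_atTop 1] with n hsm hn1
  have hn0 : (0:ℝ) < n := by exact_mod_cast hn1
  set Nn : ℝ := aSum Set.univ β n with hNn
  have hNpos : 0 < Nn := nSum_pos β hn1
  set u : ℝ := ((n+1:ℕ):ℝ) ^ β with hu
  have hupos : 0 < u := Real.rpow_pos_of_pos (by positivity) β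
  -- key identity
  have key : aSum A β n - d * Nn
      = (count A n - d * n) * u
        - ∑ k ∈ Finset.Icc 1 n, (count A k - d * k) * (((k+1:ℕ):ℝ)^β - ((k:ℕ):ℝ)^β) := by
    have h1 := abel_I1 A β n
    have h2 := abel_I1 Set.univ β n
    rw [count_univ] at h2
    have e2 : ∑ k ∈ Finset.Icc 1 n, count Set.univ k * (((k+1:ℕ):ℝ)^β - ((k:ℕ):ℝ)^β)
        = ∑ k ∈ Finset.Icc 1 n, (k:ℝ) * (((k+1:ℕ):ℝ)^β - ((k:ℕ):ℝ)^β) :=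
      Finset.sum_congr rfl fun k _ => by rw [count_univ]
    rw [e2] at h2
    have e1 : ∑ k ∈ Finset.Icc 1 n, (count A k - d * k) * (((k+1:ℕ):ℝ)^β - ((k:ℕ):ℝ)^β)
        = (∑ k ∈ Finset.Icc 1 n, count A k * (((k+1:ℕ):ℝ)^β - ((k:ℕ):ℝ)^β))
          - d * ∑ k ∈ Finset.Icc 1 n, (k:ℝ) * (((k+1:ℕ):ℝ)^β - ((k:ℕ):ℝ)^β) := by
      rw [Finset.mul_sum, ← Finset.sum_sub_distrib]
      exact Finset.sum_congr rfl fun k _ => by ring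
    rw [e1, h1, hNn, h2, hu]
    ring
  -- bound the sum term
  have hsum : |∑ k ∈ Finset.Icc 1 n, (count A k - d * k) * (((k+1:ℕ):ℝ)^β - ((k:ℕ):ℝ)^β)|
      ≤ ε * ((n:ℝ) * u) + C * u := by
    calc |∑ k ∈ Finset.Icc 1 n, (count A k - d * k) * (((k+1:ℕ):ℝ)^β - ((k:ℕ):ℝ)^β)|
        ≤ ∑ k ∈ Finset.Icc 1 n, |(count A k - d * k) * (((k+1:ℕ):ℝ)^β - ((k:ℕ):ℝ)^β)| :=
          Finset.abs_sum_le_sum_abs _ _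
    _ ≤ ∑ k ∈ Finset.Icc 1 n, (ε * k + C) * (((k+1:ℕ):ℝ)^β - ((k:ℕ):ℝ)^β) := by
        refine Finset.sum_le_sum fun k hk => ?_
        have hk1 := (Finset.mem_Icc.mp hk).1
        have hδ := delta_nonneg β hβ k hk1
        rw [abs_mul, abs_of_nonneg hδ]
        exact mul_le_mul_of_nonneg_right (hC k) hδ
    _ = ε * (∑ k ∈ Finset.Icc 1 n, (k:ℝ) * (((k+1:ℕ):ℝ)^β - ((k:ℕ):ℝ)^β))
          + C * (∑ k ∈ Finset.Icc 1 n, (((k+1:ℕ):ℝ)^β - ((k:ℕ):ℝ)^β)) := by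
        rw [Finset.mul_sum, Finset.mul_sum, ← Finset.sum_add_distrib]
        exact Finset.sum_congr rfl fun k _ => by ring
    _ ≤ ε * ((n:ℝ) * u) + C * u := by
        have h1 : ∑ k ∈ Finset.Icc 1 n, (k:ℝ) * (((k+1:ℕ):ℝ)^β - ((k:ℕ):ℝ)^β)
            ≤ (n:ℝ) * u := by
          rw [sum_kdelta β n]
          have := aSum_nonneg Set.univ β n
          rw [← hNn]; rw [← hu]; linarith
        have h2 : ∑ k ∈ Finset.Icc 1 n, (((k+1:ℕ):ℝ)^β - ((k:ℕ):ℝ)^β) ≤ u := by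
          rw [sum_delta β n, ← hu]; linarith
        have := mul_le_mul_of_nonneg_left h1 hε.le
        have := mul_le_mul_of_nonneg_left h2 hC0
        linarith
  -- bound the main term
  have hmain : |(count A n - d * n) * u| ≤ (ε * n + C) * u := by
    rw [abs_mul, abs_of_pos hupos]
    exact mul_le_mul_of_nonneg_right (hC n) hupos.le
  have habs : |aSum A β n - d * Nn| ≤ 2 * ε * ((n:ℝ) * u) + 2 * C * u := by
    rw [key]
    have htri := abs_sub ((count A n - d * (n:ℝ)) * u)
      (∑ k ∈ Finset.Icc 1 n, (count A k - d * k) * (((k+1:ℕ):ℝ)^β - ((k:ℕ):ℝ)^β))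
    have := add_le_add hmain hsum
    calc |(count A n - d * (n:ℝ)) * u
        - ∑ k ∈ Finset.Icc 1 n, (count A k - d * k) * (((k+1:ℕ):ℝ)^β - ((k:ℕ):ℝ)^β)|
        ≤ (ε * n + C) * u + (ε * ((n:ℝ) * u) + C * u) := by linarith
    _ = 2 * ε * ((n:ℝ) * u) + 2 * C * u := by ring
  -- lower bound on Nn
  have hNl : (n:ℝ) * u ≤ Cb * Nn := by
    have := nSum_lower β hβ hn1
    rw [← hu, ← hNn] at this
    rw [hCb]
    linarith [this]
  -- conclude
  have hbound : |aSum A β n / Nn - d| ≤ 2 * ε * Cb + 2 * C * Cb / n := by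
    have hdiv : aSum A β n / Nn - d = (aSum A β n - d * Nn) / Nn := by
      field_simp
    rw [hdiv, abs_div, abs_of_pos hNpos, div_le_iff₀ hNpos]
    have t1 : 2 * ε * ((n:ℝ) * u) ≤ 2 * ε * Cb * Nn := by
      have := mul_le_mul_of_nonneg_left hNl (by positivity : (0:ℝ) ≤ 2 * ε)
      linarith
    have t2 : 2 * C * u ≤ 2 * C * Cb / n * Nn := by
      have h5 : 2 * C / n * ((n:ℝ) * u) ≤ 2 * C / n * (Cb * Nn) :=
        mul_le_mul_of_nonneg_left hNl (by positivity)
      have e5 : 2 * C / n * ((n:ℝ) * u) = 2 * C * u := by field_simp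
      have e6 : 2 * C / n * (Cb * Nn) = 2 * C * Cb / n * Nn := by ring
      rw [e5, e6] at h5
      exact h5
    calc |aSum A β n - d * Nn| ≤ 2 * ε * ((n:ℝ) * u) + 2 * C * u := habs
    _ ≤ 2 * ε * Cb * Nn + 2 * C * Cb / n * Nn := add_le_add t1 t2
    _ = (2 * ε * Cb + 2 * C * Cb / n) * Nn := by ring
  have hεCb : 2 * ε * Cb = ε0 / 2 := by
    rw [hεdef]
    field_simp
    ring
  calc |aSum A β n / Nn - d| ≤ 2 * ε * Cb + 2 * C * Cb / n := hbound
  _ ≤ ε0 / 2 + ε0 / 2 := by rw [hεCb]; linarith [hsm]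
  _ = ε0 := by ring

lemma ratio_nonneg (A : Set ℕ) (α : ℝ) (n : ℕ) : 0 ≤ aSum A α n / aSum Set.univ α n :=
  div_nonneg (aSum_nonneg A α n) (aSum_nonneg Set.univ α n)

lemma ratio_le_one (A : Set ℕ) (α : ℝ) (n : ℕ) : aSum A α n / aSum Set.univ α n ≤ 1 := by
  rcases Nat.eq_zero_or_pos n with h | h
  · simp [h, aSum_zero]
  · rw [div_le_one (nSum_pos α h)]
    exact aSum_le_univ A α n

lemma abel_I2' (A : Set ℕ) (β γ : ℝ) (n : ℕ) :
    aSum A (β + γ) n = aSum A β n * ((n+1 : ℕ) : ℝ) ^ γ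
      + ∑ k ∈ Finset.Icc 1 n, aSum A β k * (((k : ℕ) : ℝ) ^ γ - ((k+1 : ℕ) : ℝ) ^ γ) := by
  rw [abel_I2 A β γ n, sub_eq_add_neg, ← Finset.sum_neg_distrib]
  congr 1
  exact Finset.sum_congr rfl fun k _ => by ring

lemma delta2_nonneg (γ : ℝ) (hγ : γ ≤ 0) (k : ℕ) (hk : 1 ≤ k) :
    0 ≤ ((k : ℕ) : ℝ) ^ γ - ((k+1 : ℕ) : ℝ) ^ γ := by
  have hk0 : (0:ℝ) < k := by positivity
  have h : ((k:ℕ):ℝ) ≤ ((k+1:ℕ):ℝ) := by push_cast; linarith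
  have := Real.rpow_le_rpow_of_nonpos hk0 h hγ
  linarith

lemma liminf_ratio_antitone (A : Set ℕ) {α β : ℝ} (hα : 0 ≤ α) (hαβ : α ≤ β) :
    Filter.liminf (fun n => aSum A β n / aSum Set.univ β n) atTop
      ≤ Filter.liminf (fun n => aSum A α n / aSum Set.univ α n) atTop := by
  set rβ : ℕ → ℝ := fun n => aSum A β n / aSum Set.univ β n with hrβ
  set rα : ℕ → ℝ := fun n => aSum A α n / aSum Set.univ α n with hrα
  set γ : ℝ := α - β with hγdef
  have hγ : γ ≤ 0 := by rw [hγdef]; linarith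
  have hβ0 : 0 ≤ β := le_trans hα hαβ
  have hBddBelowβ : IsBoundedUnder (· ≥ ·) atTop rβ :=
    isBoundedUnder_of ⟨0, fun n => ratio_nonneg A β n⟩
  have hBddAboveα : IsBoundedUnder (· ≤ ·) atTop rα :=
    isBoundedUnder_of ⟨1, fun n => ratio_le_one A α n⟩
  have hCobα : IsCoboundedUnder (· ≥ ·) atTop rα := hBddAboveα.isCoboundedUnder_ge
  set ℓ : ℝ := Filter.liminf rβ atTop with hℓ
  refine le_of_forall_pos_le_add fun ε hε => ?_
  set m : ℝ := max (ℓ - ε/2) 0 with hm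
  have hm0 : 0 ≤ m := le_max_right _ _
  have hmℓ : ℓ - ε/2 ≤ m := le_max_left _ _
  -- eventually rβ k ≥ m
  have hev : ∀ᶠ k in atTop, m ≤ rβ k := by
    have h1 : ∀ᶠ k in atTop, ℓ - ε/2 < rβ k :=
      eventually_lt_of_lt_liminf (by rw [← hℓ]; linarith) hBddBelowβ
    filter_upwards [h1] with k hk
    exact max_le hk.le (ratio_nonneg A β k)
  obtain ⟨K0, hK0⟩ := eventually_atTop.mp hev
  set K : ℕ := max K0 1 with hK
  have hK1 : 1 ≤ K := le_max_right _ _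
  have hKbound : ∀ k, K ≤ k → m * aSum Set.univ β k ≤ aSum A β k := by
    intro k hk
    have hk1 : 1 ≤ k := le_trans hK1 hk
    have hNpos := nSum_pos β hk1
    have := hK0 k (le_trans (le_max_left _ _) hk)
    rw [hrβ] at this
    calc m * aSum Set.univ β k ≤ (aSum A β k / aSum Set.univ β k) * aSum Set.univ β k :=
          mul_le_mul_of_nonneg_right this hNpos.le
    _ = aSum A β k := by field_simp
  set C : ℝ := ∑ k ∈ Finset.Icc 1 (K-1), aSum Set.univ β k * (((k:ℕ):ℝ)^γ - ((k+1:ℕ):ℝ)^γ)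
    with hCdef
  have hC0 : 0 ≤ C := Finset.sum_nonneg fun k hk =>
    mul_nonneg (aSum_nonneg _ _ _) (delta2_nonneg γ hγ k (Finset.mem_Icc.mp hk).1)
  -- main pointwise estimate
  have hpoint : ∀ n, K ≤ n → m * aSum Set.univ α n - m * C ≤ aSum A α n := by
    intro n hn
    have hn1 : 1 ≤ n := le_trans hK1 hn
    have hβγ : β + γ = α := by rw [hγdef]; ring
    have hA := abel_I2' A β γ n
    have hU := abel_I2' Set.univ β γ n
    rw [hβγ] at hA hU
    have hupos : (0:ℝ) < ((n+1:ℕ):ℝ) ^ γ := Real.rpow_pos_of_pos (by positivity) γ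
    -- first term
    have t1 : m * (aSum Set.univ β n * ((n+1:ℕ):ℝ)^γ) ≤ aSum A β n * ((n+1:ℕ):ℝ)^γ := by
      have := hKbound n hn
      calc m * (aSum Set.univ β n * ((n+1:ℕ):ℝ)^γ) = (m * aSum Set.univ β n) * ((n+1:ℕ):ℝ)^γ := by
            ring
      _ ≤ aSum A β n * ((n+1:ℕ):ℝ)^γ := mul_le_mul_of_nonneg_right this hupos.le
    -- sum splitting
    have hsplit : ∑ k ∈ Finset.Icc 1 n, aSum Set.univ β k * (((k:ℕ):ℝ)^γ - ((k+1:ℕ):ℝ)^γ)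
        = C + ∑ k ∈ Finset.Icc K n, aSum Set.univ β k * (((k:ℕ):ℝ)^γ - ((k+1:ℕ):ℝ)^γ) := by
      rw [hCdef]
      have e1 : Finset.Icc 1 n = Finset.Ioc 0 n := by rw [← Finset.Icc_add_one_left_eq_Ioc]; rfl
      have e2 : Finset.Icc 1 (K-1) = Finset.Ioc 0 (K-1) := by rw [← Finset.Icc_add_one_left_eq_Ioc]; rfl
      have e3 : Finset.Icc K n = Finset.Ioc (K-1) n := by
        rw [← Finset.Icc_add_one_left_eq_Ioc]
        congr 1
        omega
      rw [e1, e2, e3]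
      exact (Finset.sum_Ioc_consecutive _ (by omega) (by omega)).symm
    have t2 : m * (∑ k ∈ Finset.Icc 1 n, aSum Set.univ β k * (((k:ℕ):ℝ)^γ - ((k+1:ℕ):ℝ)^γ)) - m * C
        ≤ ∑ k ∈ Finset.Icc 1 n, aSum A β k * (((k:ℕ):ℝ)^γ - ((k+1:ℕ):ℝ)^γ) := by
      rw [hsplit]
      have s1 : m * ∑ k ∈ Finset.Icc K n, aSum Set.univ β k * (((k:ℕ):ℝ)^γ - ((k+1:ℕ):ℝ)^γ)
          ≤ ∑ k ∈ Finset.Icc K n, aSum A β k * (((k:ℕ):ℝ)^γ - ((k+1:ℕ):ℝ)^γ) := by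
        rw [Finset.mul_sum]
        refine Finset.sum_le_sum fun k hk => ?_
        obtain ⟨hk1, hk2⟩ := Finset.mem_Icc.mp hk
        have hδ := delta2_nonneg γ hγ k (le_trans hK1 hk1)
        calc m * (aSum Set.univ β k * (((k:ℕ):ℝ)^γ - ((k+1:ℕ):ℝ)^γ))
            = (m * aSum Set.univ β k) * (((k:ℕ):ℝ)^γ - ((k+1:ℕ):ℝ)^γ) := by ring
        _ ≤ aSum A β k * (((k:ℕ):ℝ)^γ - ((k+1:ℕ):ℝ)^γ) :=
            mul_le_mul_of_nonneg_right (hKbound k hk1) hδ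
      have s2 : ∑ k ∈ Finset.Icc K n, aSum A β k * (((k:ℕ):ℝ)^γ - ((k+1:ℕ):ℝ)^γ)
          ≤ ∑ k ∈ Finset.Icc 1 n, aSum A β k * (((k:ℕ):ℝ)^γ - ((k+1:ℕ):ℝ)^γ) := by
        refine Finset.sum_le_sum_of_subset_of_nonneg
          (Finset.Icc_subset_Icc hK1 le_rfl) fun k hk _ =>
          mul_nonneg (aSum_nonneg _ _ _) (delta2_nonneg γ hγ k (Finset.mem_Icc.mp hk).1)
      nlinarith [hm0]
    rw [hA, hU]
    nlinarith [t1, t2]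
  -- eventually rα n ≥ m - ε/2
  have hev2 : ∀ᶠ n in atTop, m - ε/2 ≤ rα n := by
    have ht : Tendsto (fun n : ℕ => m * C / aSum Set.univ α n) atTop (𝓝 0) :=
      Tendsto.div_atTop tendsto_const_nhds (nSum_tendsto α hα)
    have hsm : ∀ᶠ n : ℕ in atTop, m * C / aSum Set.univ α n ≤ ε/2 :=
      ht.eventually (eventually_of_mem (Iic_mem_nhds (by linarith)) fun x hx => hx)
    filter_upwards [hsm, eventually_ge_atTop K, eventually_ge_atTop 1] with n h1 h2 h3
    have hNpos := nSum_pos α h3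
    have := hpoint n h2
    rw [hrα]
    rw [le_div_iff₀ hNpos]
    have e : (m - ε/2) * aSum Set.univ α n
        = m * aSum Set.univ α n - ε/2 * aSum Set.univ α n := by ring
    rw [e]
    have h4 : m * C ≤ ε/2 * aSum Set.univ α n := by
      rw [div_le_iff₀ hNpos] at h1
      linarith
    linarith
  have hliminf : m - ε/2 ≤ Filter.liminf rα atTop := le_liminf_of_le hCobα hev2
  linarith [hmℓ, hliminf]

lemma liminf_split (A B : Set ℕ) (hAB : Disjoint A B) {d α : ℝ}
    (hd : HasDensity A d) (hα : 0 ≤ α) :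
    lowerADens (A ∪ B) α = d + lowerADens B α := by
  have hT := tendsto_ratio hd hα
  set u : ℕ → ℝ := fun n => aSum A α n / aSum Set.univ α n with hu
  set v : ℕ → ℝ := fun n => aSum B α n / aSum Set.univ α n with hv
  have hfun : (fun n => aSum (A ∪ B) α n / aSum Set.univ α n) = u + v := by
    funext n
    simp only [hu, hv, Pi.add_apply]
    rw [aSum_union A B hAB, add_div]
  have hu_le : IsBoundedUnder (· ≤ ·) atTop u := hT.isBoundedUnder_le
  have hu_ge : IsBoundedUnder (· ≥ ·) atTop u := hT.isBoundedUnder_ge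
  have hv_ge : IsBoundedUnder (· ≥ ·) atTop v := isBoundedUnder_of ⟨0, fun n => ratio_nonneg B α n⟩
  have hv_le : IsBoundedUnder (· ≤ ·) atTop v := isBoundedUnder_of ⟨1, fun n => ratio_le_one B α n⟩
  have hv_cob : IsCoboundedUnder (· ≥ ·) atTop v := hv_le.isCoboundedUnder_ge
  have h1 := le_liminf_add hu_ge hu_le hv_ge hv_cob
  have h2 := liminf_add_le hu_ge hu_le hv_ge hv_cob
  rw [hT.liminf_eq] at h1
  rw [hT.limsup_eq] at h2
  have : lowerADens (A ∪ B) α = liminf (u + v) atTop := by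
    rw [lowerADens, hfun]
  rw [this, lowerADens]
  have h3 := le_antisymm h2 h1
  rw [← hv] at *
  linarith [h1, h2]

lemma lowerADens_nonneg (B : Set ℕ) (α : ℝ) : 0 ≤ lowerADens B α := by
  have hv_le : IsBoundedUnder (· ≤ ·) atTop (fun n => aSum B α n / aSum Set.univ α n) :=
    isBoundedUnder_of ⟨1, fun n => ratio_le_one B α n⟩
  exact le_liminf_of_le hv_le.isCoboundedUnder_ge
    (Eventually.of_forall fun n => ratio_nonneg B α n)

lemma lowerADens_tendsto (B : Set ℕ) :
    Tendsto (lowerADens B) atTop (𝓝 (sInf (lowerADens B '' Set.Ici 0))) := by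
  set S : Set ℝ := lowerADens B '' Set.Ici 0 with hS
  have hSne : S.Nonempty := ⟨lowerADens B 0, 0, Set.self_mem_Ici, rfl⟩
  have hSbdd : BddBelow S := ⟨0, by rintro y ⟨x, _, rfl⟩; exact lowerADens_nonneg B x⟩
  rw [Metric.tendsto_atTop]
  intro ε hε
  obtain ⟨y, hyS, hy⟩ := exists_lt_of_csInf_lt hSne
    (lt_add_of_pos_right (sInf S) hε)
  obtain ⟨x₁, hx₁, rfl⟩ := hyS
  refine ⟨x₁, fun x hx => ?_⟩
  have hx0 : (0:ℝ) ≤ x := le_trans hx₁ hx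
  have hle : lowerADens B x ≤ lowerADens B x₁ := liminf_ratio_antitone B hx₁ hx
  have hge : sInf S ≤ lowerADens B x := csInf_le hSbdd ⟨x, hx0, rfl⟩
  rw [Real.dist_eq, abs_lt]
  constructor <;> linarith


/-- If `A` and `B` are disjoint and `A` has asymptotic density `d(A)`, then
`d̲_∞(A ∪ B) = d(A) + d̲_∞(B)`. -/
theorem stmt8 (A B : Set ℕ) (hAB : Disjoint A B) (d : ℝ) (hd : HasDensity A d) :
    dInftyLower (A ∪ B) = d + dInftyLower B := by
  have hB := lowerADens_tendsto B
  set L : ℝ := sInf (lowerADens B '' Set.Ici 0) with hL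
  have hAB2 : Tendsto (lowerADens (A ∪ B)) atTop (𝓝 (d + L)) := by
    have h1 : Tendsto (fun x : ℝ => d + lowerADens B x) atTop (𝓝 (d + L)) :=
      tendsto_const_nhds.add hB
    refine h1.congr' ?_
    filter_upwards [eventually_ge_atTop (0:ℝ)] with x hx
    exact (liminf_split A B hAB hd hx).symm
  rw [dInftyLower, dInftyLower, hAB2.limUnder_eq, hB.limUnder_eq]
end
end

section
/- For every A ⊆ ℕ one has λ̲(A) = d̲_∞(A). -/
open Filter Topology

noncomputable section

section Basics

open Finset

namespace Stmt9

lemma chiFun_nonneg (A : Set ℕ) (k : ℕ) : 0 ≤ chiFun A k := by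
  unfold chiFun; by_cases h : k ∈ A <;> simp [Set.indicator, h]

lemma chiFun_le_one (A : Set ℕ) (k : ℕ) : chiFun A k ≤ 1 := by
  unfold chiFun; by_cases h : k ∈ A <;> simp [Set.indicator, h]

lemma chiFun_univ (k : ℕ) : chiFun Set.univ k = 1 := by simp [chiFun]

lemma chiFun_add_compl (A : Set ℕ) (k : ℕ) : chiFun A k + chiFun Aᶜ k = 1 := by
  unfold chiFun; by_cases h : k ∈ A <;> simp [Set.indicator, h]

lemma chiFun_union (A B : Set ℕ) (h : Disjoint A B) (k : ℕ) :
    chiFun (A ∪ B) k = chiFun A k + chiFun B k := by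
  unfold chiFun
  rw [Set.indicator_union_of_disjoint h]

lemma count_Ioc (A : Set ℕ) (n : ℕ) : count A n = ∑ k ∈ Finset.Ioc 0 n, chiFun A k := by
  rw [count, ← Finset.Icc_add_one_left_eq_Ioc, zero_add]

/-- difference of counts as a sum over `Ioc`. -/
lemma count_diff (A : Set ℕ) {m n : ℕ} (h : m ≤ n) :
    count A n - count A m = ∑ k ∈ Finset.Ioc m n, chiFun A k := by
  rw [count_Ioc, count_Ioc, ← Finset.sum_Ioc_consecutive _ (Nat.zero_le m) h]
  ring

lemma count_mono (A : Set ℕ) {m n : ℕ} (h : m ≤ n) : count A m ≤ count A n := by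
  have := count_diff A h
  have h2 : 0 ≤ ∑ k ∈ Finset.Ioc m n, chiFun A k :=
    Finset.sum_nonneg fun k _ => chiFun_nonneg A k
  linarith

lemma count_nonneg (A : Set ℕ) (n : ℕ) : 0 ≤ count A n :=
  Finset.sum_nonneg fun k _ => chiFun_nonneg A k

lemma count_diff_le (A : Set ℕ) {m n : ℕ} (h : m ≤ n) :
    count A n - count A m ≤ (n : ℝ) - m := by
  rw [count_diff A h]
  calc ∑ k ∈ Finset.Ioc m n, chiFun A k ≤ ∑ k ∈ Finset.Ioc m n, (1:ℝ) :=
        Finset.sum_le_sum fun k _ => chiFun_le_one A k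
    _ = ((n - m : ℕ) : ℝ) := by simp [Nat.card_Ioc]
    _ ≤ (n:ℝ) - m := by
        rw [Nat.cast_sub h]

lemma count_le (A : Set ℕ) (n : ℕ) : count A n ≤ n := by
  have := count_diff_le A (Nat.zero_le n)
  simp [count] at *
  simpa [count_Ioc] using this

end Stmt9

end Basics
namespace Stmt9

open Finset

lemma aSum_Ioc (A : Set ℕ) (α : ℝ) (n : ℕ) :
    aSum A α n = ∑ k ∈ Finset.Ioc 0 n, chiFun A k * (k:ℝ)^α := by
  rw [aSum, ← Finset.Icc_add_one_left_eq_Ioc, zero_add]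

lemma aSum_diff (A : Set ℕ) (α : ℝ) {m n : ℕ} (h : m ≤ n) :
    aSum A α n - aSum A α m = ∑ k ∈ Finset.Ioc m n, chiFun A k * (k:ℝ)^α := by
  rw [aSum_Ioc, aSum_Ioc, ← Finset.sum_Ioc_consecutive _ (Nat.zero_le m) h]
  ring

lemma aSum_nonneg (A : Set ℕ) (α : ℝ) (n : ℕ) : 0 ≤ aSum A α n :=
  Finset.sum_nonneg fun k _ => mul_nonneg (chiFun_nonneg A k) (Real.rpow_nonneg (Nat.cast_nonneg k) α)

lemma aSum_mono (A : Set ℕ) (α : ℝ) {m n : ℕ} (h : m ≤ n) : aSum A α m ≤ aSum A α n := by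
  have := aSum_diff A α h
  have h2 : 0 ≤ ∑ k ∈ Finset.Ioc m n, chiFun A k * (k:ℝ)^α :=
    Finset.sum_nonneg fun k _ => mul_nonneg (chiFun_nonneg A k) (Real.rpow_nonneg (Nat.cast_nonneg k) α)
  linarith

lemma aSum_le_univ (A : Set ℕ) (α : ℝ) (n : ℕ) : aSum A α n ≤ aSum Set.univ α n := by
  apply Finset.sum_le_sum
  intro k _
  have := Real.rpow_nonneg (Nat.cast_nonneg k) α
  nlinarith [chiFun_le_one A k, chiFun_univ k]

lemma aSum_univ_pos (α : ℝ) {n : ℕ} (h : 1 ≤ n) : 0 < aSum Set.univ α n := by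
  rw [aSum]
  apply Finset.sum_pos'
  · intro k _
    exact mul_nonneg (chiFun_nonneg _ k) (Real.rpow_nonneg (Nat.cast_nonneg k) α)
  · refine ⟨1, by simp [h], ?_⟩
    simp [chiFun_univ]

lemma aSum_add_compl (A : Set ℕ) (α : ℝ) (n : ℕ) :
    aSum A α n + aSum Aᶜ α n = aSum Set.univ α n := by
  rw [aSum, aSum, aSum, ← Finset.sum_add_distrib]
  apply Finset.sum_congr rfl
  intro k _
  rw [← add_mul, chiFun_add_compl, chiFun_univ]

lemma aSum_union (A B : Set ℕ) (h : Disjoint A B) (α : ℝ) (n : ℕ) :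
    aSum (A ∪ B) α n = aSum A α n + aSum B α n := by
  rw [aSum, aSum, aSum, ← Finset.sum_add_distrib]
  apply Finset.sum_congr rfl
  intro k _
  rw [← add_mul, chiFun_union A B h]

/-- gradient inequalities for `x ^ (α+1)`, `α ≥ 0`. -/
lemma rpow_slope {α : ℝ} (hα : 0 ≤ α) {a b : ℝ} (h0 : 0 ≤ a) (hab : a ≤ b) :
    (α+1) * a^α * (b-a) ≤ b^(α+1) - a^(α+1) ∧
      b^(α+1) - a^(α+1) ≤ (α+1) * b^α * (b-a) := by
  rcases eq_or_lt_of_le hab with rfl | hlt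
  · simp
  have hb : 0 ≤ b := le_trans h0 hab
  have hcont : ∀ x ∈ Set.Icc a b, HasDerivAt (fun x : ℝ => x^(α+1)) ((α+1) * x^α) x := by
    intro x hx
    have := Real.hasDerivAt_rpow_const (x := x) (p := α+1) (Or.inr (by linarith))
    simpa using this
  obtain ⟨c, hc, hslope⟩ := exists_hasDerivAt_eq_slope (fun x : ℝ => x^(α+1)) _ hlt
    (fun x hx => (hcont x hx).continuousAt.continuousWithinAt)
    (fun x hx => hcont x (Set.mem_Icc_of_Ioo hx))
  have hca : 0 ≤ c := le_trans h0 (le_of_lt hc.1)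
  have h1 : a^α ≤ c^α := Real.rpow_le_rpow h0 (le_of_lt hc.1) hα
  have h2 : c^α ≤ b^α := Real.rpow_le_rpow hca (le_of_lt hc.2) hα
  have hba : 0 < b - a := by linarith
  rw [eq_div_iff (ne_of_gt hba)] at hslope
  constructor
  · nlinarith [mul_le_mul_of_nonneg_right
      (mul_le_mul_of_nonneg_left h1 (by linarith : (0:ℝ) ≤ α+1)) (le_of_lt hba)]
  · nlinarith [mul_le_mul_of_nonneg_right
      (mul_le_mul_of_nonneg_left h2 (by linarith : (0:ℝ) ≤ α+1)) (le_of_lt hba)]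

end Stmt9
namespace Stmt9

open Finset

lemma aSum_univ_eq (α : ℝ) (n : ℕ) :
    aSum Set.univ α n = ∑ i ∈ Finset.range n, ((i:ℝ)+1)^α := by
  rw [aSum]
  rw [show Finset.Icc 1 n = Finset.Ico 1 (n+1) by rfl]
  rw [Finset.sum_Ico_eq_sum_range]
  simp [chiFun_univ, add_comm]

lemma NsumLB {α : ℝ} (hα : 0 ≤ α) (n : ℕ) :
    (n:ℝ)^(α+1) ≤ (α+1) * aSum Set.univ α n := by
  have key : ∀ i : ℕ, ((i:ℝ)+1)^(α+1) - (i:ℝ)^(α+1) ≤ (α+1) * ((i:ℝ)+1)^α := by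
    intro i
    have := (rpow_slope hα (Nat.cast_nonneg i) (by linarith : (i:ℝ) ≤ (i:ℝ)+1)).2
    simpa using this
  have tele : ∑ i ∈ Finset.range n, (((i:ℝ)+1)^(α+1) - (i:ℝ)^(α+1))
      = (n:ℝ)^(α+1) - (0:ℝ)^(α+1) := by
    have := Finset.sum_range_sub (fun i : ℕ => ((i:ℝ))^(α+1)) n
    simpa using this
  have h0 : (0:ℝ)^(α+1) = 0 := Real.zero_rpow (by linarith)
  rw [aSum_univ_eq, Finset.mul_sum]
  calc (n:ℝ)^(α+1) = ∑ i ∈ Finset.range n, (((i:ℝ)+1)^(α+1) - (i:ℝ)^(α+1)) := by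
        rw [tele, h0]; ring
    _ ≤ ∑ i ∈ Finset.range n, (α+1) * ((i:ℝ)+1)^α := Finset.sum_le_sum fun i _ => key i

lemma NsumUB {α : ℝ} (hα : 0 ≤ α) (n : ℕ) :
    (α+1) * aSum Set.univ α n ≤ ((n:ℝ)+1)^(α+1) := by
  have key : ∀ i : ℕ, (α+1) * ((i:ℝ)+1)^α ≤ ((i:ℝ)+2)^(α+1) - ((i:ℝ)+1)^(α+1) := by
    intro i
    have := (rpow_slope hα (by positivity : (0:ℝ) ≤ (i:ℝ)+1) (by linarith : (i:ℝ)+1 ≤ (i:ℝ)+2)).1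
    have h2 : ((i:ℝ)+2) - ((i:ℝ)+1) = 1 := by ring
    rw [h2, mul_one] at this
    exact this
  have tele : ∑ i ∈ Finset.range n, ((((i+1):ℝ)+1)^(α+1) - (((i:ℝ))+1)^(α+1))
      = ((n:ℝ)+1)^(α+1) - ((0:ℝ)+1)^(α+1) := by
    have := Finset.sum_range_sub (fun i : ℕ => ((i:ℝ)+1)^(α+1)) n
    simpa using this
  have h1 : ((0:ℝ)+1)^(α+1) = 1 := by norm_num
  have hone : (0:ℝ) ≤ 1 := by norm_num
  rw [aSum_univ_eq, Finset.mul_sum]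
  calc ∑ i ∈ Finset.range n, (α+1) * ((i:ℝ)+1)^α
      ≤ ∑ i ∈ Finset.range n, (((i:ℝ)+2)^(α+1) - ((i:ℝ)+1)^(α+1)) :=
        Finset.sum_le_sum fun i _ => key i
    _ = ((n:ℝ)+1)^(α+1) - 1 := by
        rw [h1] at tele
        rw [← tele]
        apply Finset.sum_congr rfl; intro i _
        congr 2
        ring
    _ ≤ ((n:ℝ)+1)^(α+1) := by linarith

lemma one_sub_rpow_le_exp {x t : ℝ} (hx0 : 0 ≤ x) (hx1 : x ≤ 1) (ht : 0 ≤ t) :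
    (1-x)^t ≤ Real.exp (-(t*x)) := by
  have h1 : (1-x) ≤ Real.exp (-x) := by
    have := Real.add_one_le_exp (-x)
    linarith
  calc (1-x)^t ≤ (Real.exp (-x))^t := Real.rpow_le_rpow (by linarith) h1 ht
    _ = Real.exp (-(t*x)) := by rw [← Real.exp_mul]; ring_nf

end Stmt9
namespace Stmt9

open Finset

lemma abel_aux (x w : ℕ → ℝ) (n : ℕ) : ∀ k, k ≤ n →
    ∑ j ∈ Finset.Ioc (n-k) n, x j * w j
      = (∑ v ∈ Finset.Icc 1 k, (∑ j ∈ Finset.Ioc (n-v) n, x j) * (w (n-v+1) - w (n-v)))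
        + (∑ j ∈ Finset.Ioc (n-k) n, x j) * w (n-k) := by
  intro k
  induction k with
  | zero => simp
  | succ k ih =>
    intro hk1
    have hk : k ≤ n := Nat.le_of_succ_le hk1
    have hm : n - (k+1) + 1 = n - k := by omega
    have hsplit : ∀ y : ℕ → ℝ, ∑ j ∈ Finset.Ioc (n-(k+1)) n, y j
        = y (n-k) + ∑ j ∈ Finset.Ioc (n-k) n, y j := by
      intro y
      have h1 : n - (k+1) ≤ n - k := by omega
      rw [← Finset.sum_Ioc_consecutive y h1 (Nat.sub_le n k)]
      congr 1
      have : Finset.Ioc (n-(k+1)) (n-k) = {n-k} := by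
        rw [← hm]
        exact Nat.Ioc_succ_singleton _
      rw [this, Finset.sum_singleton]
    have hIcc : Finset.Icc 1 (k+1) = insert (k+1) (Finset.Icc 1 k) := by
      ext j; simp only [Finset.mem_Icc, Finset.mem_insert]; omega
    rw [hsplit (fun j => x j * w j), ih hk, hIcc, Finset.sum_insert (by simp)]
    rw [hsplit x]
    rw [hm]
    ring

/-- Abel summation, suffix form. -/
lemma abel_identity (x w : ℕ → ℝ) {m n : ℕ} (h : m ≤ n) :
    ∑ j ∈ Finset.Ioc m n, x j * w j
      = (∑ v ∈ Finset.Icc 1 (n-m), (∑ j ∈ Finset.Ioc (n-v) n, x j) * (w (n-v+1) - w (n-v)))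
        + (∑ j ∈ Finset.Ioc m n, x j) * w m := by
  have := abel_aux x w n (n-m) (Nat.sub_le n m)
  rw [show n - (n-m) = m by omega] at this
  exact this

lemma telescope_w (w : ℕ → ℝ) (n : ℕ) : ∀ k, k ≤ n →
    ∑ v ∈ Finset.Icc 1 k, (w (n-v+1) - w (n-v)) = w n - w (n-k) := by
  intro k
  induction k with
  | zero => simp
  | succ k ih =>
    intro hk1
    have hk : k ≤ n := Nat.le_of_succ_le hk1
    have hm : n - (k+1) + 1 = n - k := by omega
    have hIcc : Finset.Icc 1 (k+1) = insert (k+1) (Finset.Icc 1 k) := by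
      ext j; simp only [Finset.mem_Icc, Finset.mem_insert]; omega
    rw [hIcc, Finset.sum_insert (by simp), ih hk, hm]
    ring

/-- numbered weights version: identity for x ≡ 1. -/
lemma abel_const (w : ℕ → ℝ) {m n : ℕ} (h : m ≤ n) :
    ∑ j ∈ Finset.Ioc m n, w j
      = (∑ v ∈ Finset.Icc 1 (n-m), ((v:ℝ)) * (w (n-v+1) - w (n-v)))
        + ((n:ℝ)-m) * w m := by
  have := abel_identity (fun _ => (1:ℝ)) w h
  simp only [one_mul] at this
  rw [this]
  congr 1
  · apply Finset.sum_congr rfl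
    intro v hv
    simp only [Finset.mem_Icc] at hv
    have : (Finset.Ioc (n-v) n).card = v := by
      rw [Nat.card_Ioc]; omega
    rw [Finset.sum_const, this]
    simp
  · have : (Finset.Ioc m n).card = n - m := by rw [Nat.card_Ioc]
    rw [Finset.sum_const, this]
    have : ((n - m : ℕ) : ℝ) = (n:ℝ) - m := by
      rw [Nat.cast_sub h]
    simp [this]

/-- Abel upper bound: if all suffix sums of `x` over `(n-v, n]` are `≤ L v + D`,
`w` monotone nonneg, then the weighted sum is `≤ L ∑ w + D * w n`. -/
lemma abel_upper (x w : ℕ → ℝ) {m n : ℕ} (h : m ≤ n) (L D : ℝ)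
    (hw : Monotone w) (hw0 : 0 ≤ w m) (hD : 0 ≤ D)
    (hS : ∀ v, 1 ≤ v → v ≤ n - m → ∑ j ∈ Finset.Ioc (n-v) n, x j ≤ L * v + D) :
    ∑ j ∈ Finset.Ioc m n, x j * w j ≤ L * ∑ j ∈ Finset.Ioc m n, w j + D * w n := by
  rw [abel_identity x w h, abel_const w h]
  have htel := telescope_w w n (n-m) (Nat.sub_le n m)
  rw [show n - (n-m) = m by omega] at htel
  have step1 : ∑ v ∈ Finset.Icc 1 (n-m), (∑ j ∈ Finset.Ioc (n-v) n, x j) * (w (n-v+1) - w (n-v))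
      ≤ ∑ v ∈ Finset.Icc 1 (n-m), (L*v+D) * (w (n-v+1) - w (n-v)) := by
    apply Finset.sum_le_sum
    intro v hv
    simp only [Finset.mem_Icc] at hv
    have hΔ : 0 ≤ w (n-v+1) - w (n-v) := by
      have := hw (Nat.le_succ (n-v)); simpa using this
    exact mul_le_mul_of_nonneg_right (hS v hv.1 hv.2) hΔ
  rcases Nat.eq_zero_or_pos (n - m) with h0 | hpos
  · -- m = n
    have hmn : m = n := by omega
    subst hmn
    rw [show m - m = 0 by omega]
    simp only [Finset.Icc_eq_empty (by omega : ¬ (1:ℕ) ≤ 0), Finset.Ioc_self, Finset.sum_empty, zero_add,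
      sub_self, zero_mul, add_zero, mul_zero]
    nlinarith [mul_nonneg hD (le_trans hw0 (hw (le_refl m)))]
  have step2 : ∑ j ∈ Finset.Ioc m n, x j ≤ L * ((n:ℝ)-m) + D := by
    have := hS (n-m) hpos (le_refl _)
    rw [show n - (n-m) = m by omega] at this
    rw [Nat.cast_sub h] at this
    exact this
  have hΔsum : ∑ v ∈ Finset.Icc 1 (n-m), (L*v+D) * (w (n-v+1) - w (n-v))
      = L * (∑ v ∈ Finset.Icc 1 (n-m), ((v:ℝ)) * (w (n-v+1) - w (n-v))) + D * (w n - w m) := by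
    rw [← htel, Finset.mul_sum, Finset.mul_sum, ← Finset.sum_add_distrib]
    apply Finset.sum_congr rfl
    intro v _
    ring
  have hwm : w m ≤ w n := hw h
  nlinarith [step1, step2, hΔsum, hw0, hD, mul_le_mul_of_nonneg_right step2 hw0]

/-- Abel lower bound. -/
lemma abel_lower (x w : ℕ → ℝ) {m n : ℕ} (h : m ≤ n) (L D : ℝ)
    (hw : Monotone w) (hw0 : 0 ≤ w m) (hD : 0 ≤ D)
    (hS : ∀ v, 1 ≤ v → v ≤ n - m → L * v - D ≤ ∑ j ∈ Finset.Ioc (n-v) n, x j) :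
    L * ∑ j ∈ Finset.Ioc m n, w j - D * w n ≤ ∑ j ∈ Finset.Ioc m n, x j * w j := by
  have key := abel_upper (fun j => - x j) w h (-L) D hw hw0 hD ?_
  · have e1 : ∑ j ∈ Finset.Ioc m n, (fun j => - x j) j * w j
        = - ∑ j ∈ Finset.Ioc m n, x j * w j := by
      rw [← Finset.sum_neg_distrib]
      apply Finset.sum_congr rfl; intro j _; ring
    rw [e1] at key
    linarith
  · intro v h1 h2
    have h3 := hS v h1 h2
    have e2 : ∑ j ∈ Finset.Ioc (n-v) n, (fun j => - x j) j
        = - ∑ j ∈ Finset.Ioc (n-v) n, x j := by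
      rw [← Finset.sum_neg_distrib]
    rw [e2]
    linarith

end Stmt9
namespace Stmt9

open Finset Filter

lemma weight_mono {α : ℝ} (hα : 0 ≤ α) : Monotone (fun k : ℕ => (k:ℝ)^α) := by
  intro a b hab
  exact Real.rpow_le_rpow (Nat.cast_nonneg a) (Nat.cast_le.mpr hab) hα

lemma sum_Ioc_weight {α : ℝ} {m n : ℕ} (h : m ≤ n) :
    ∑ j ∈ Finset.Ioc m n, (j:ℝ)^α = aSum Set.univ α n - aSum Set.univ α m := by
  rw [aSum_diff Set.univ α h]
  apply Finset.sum_congr rfl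
  intro j _
  rw [chiFun_univ, one_mul]

/-- Reassembly: from suffix window bounds at `n` to a lower bound on the
`α`-weighted ratio. -/
lemma ratio_lower_of_suffix (A : Set ℕ) {α c δ : ℝ} {n : ℕ} (hα : 0 ≤ α)
    (hn : 1 ≤ n) (hδ : 0 ≤ δ)
    (hS : ∀ v : ℕ, 1 ≤ v → v ≤ n → c * v - δ * n ≤ count A n - count A (n - v)) :
    (c - δ*(α+1)) * aSum Set.univ α n ≤ aSum A α n := by
  have hZpos : 0 < aSum Set.univ α n := aSum_univ_pos α hn
  have habel := abel_lower (chiFun A) (fun k : ℕ => (k:ℝ)^α)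
      (Nat.zero_le n) c (δ * n) (weight_mono hα) (Real.rpow_nonneg (by norm_num) α)
      (by positivity) ?_
  · have e1 : ∑ j ∈ Finset.Ioc 0 n, chiFun A j * (j:ℝ)^α = aSum A α n := (aSum_Ioc A α n).symm
    have e2 : ∑ j ∈ Finset.Ioc 0 n, (j:ℝ)^α = aSum Set.univ α n := by
      have := sum_Ioc_weight (α := α) (Nat.zero_le n)
      rw [this]
      simp [aSum]
    rw [e1, e2] at habel
    -- habel : c * Z - δ*n * n^α ≤ aSum A α n
    have hpow : δ * n * (n:ℝ)^α ≤ δ*(α+1) * aSum Set.univ α n := by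
      have h1 : (n:ℝ)^(α+1) ≤ (α+1) * aSum Set.univ α n := NsumLB hα n
      have h2 : (n:ℝ) * (n:ℝ)^α = (n:ℝ)^(α+1) := by
        rw [Real.rpow_add_one (by positivity : (n:ℝ) ≠ 0) α]
        ring
      calc δ * n * (n:ℝ)^α = δ * ((n:ℝ) * (n:ℝ)^α) := by ring
        _ = δ * (n:ℝ)^(α+1) := by rw [h2]
        _ ≤ δ * ((α+1) * aSum Set.univ α n) := by
            apply mul_le_mul_of_nonneg_left h1 hδ
        _ = δ*(α+1) * aSum Set.univ α n := by ring
    nlinarith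
  · intro v h1 h2
    have h2' : v ≤ n := by omega
    have := hS v h1 h2'
    rw [count_diff A (Nat.sub_le n v)] at this
    linarith

set_option maxHeartbeats 1000000 in
/-- The key lemma: `α`-density lower bounds for one large `α` force window
lower bounds at relative scale `δ`. -/
lemma windows_of_alpha (A : Set ℕ) {c ε δ α : ℝ}
    (hε : 0 < ε) (hε1 : ε ≤ 1) (hc : c ≤ 1) (hδ : 0 < δ) (hδ1 : δ ≤ 1) (hα : 0 ≤ α)
    (hα₀ : 2*Real.log (16/ε) ≤ (α+1)*(ε*δ))
    (hev : ∀ᶠ n : ℕ in atTop, (c - ε/8) * aSum Set.univ α n ≤ aSum A α n) :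
    ∀ᶠ n : ℕ in atTop, ∀ v : ℕ, δ*(n:ℝ) ≤ v → v ≤ n →
      (c - ε)*(v:ℝ) ≤ count A n - count A (n - v) := by
  rcases le_or_gt c ε with hcε | hcε
  · -- trivial: (c-ε) ≤ 0
    filter_upwards with n
    intro v _ hvn
    have h1 : count A (n-v) ≤ count A n := count_mono A (Nat.sub_le n v)
    have h2 : (c-ε) * (v:ℝ) ≤ 0 := mul_nonpos_of_nonpos_of_nonneg (by linarith) (Nat.cast_nonneg v)
    linarith
  by_contra hcon
  rw [Filter.not_eventually] at hcon
  obtain ⟨N₁, hN₁⟩ := eventually_atTop.mp hev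
  set R : ℝ := (4/(3*ε*δ)) * ((N₁:ℝ) + 4/(ε*δ) + 1) with hR
  obtain ⟨n₀, hn₀M, hbad⟩ := Filter.frequently_atTop.mp hcon ⌈R⌉₊
  push_neg at hbad
  obtain ⟨v₀, hv₀δ, hv₀n, hbadineq⟩ := hbad
  -- basic positivity
  have hv₀1 : 1 ≤ v₀ := by
    rcases Nat.eq_zero_or_pos v₀ with h | h
    · subst h
      rw [Nat.sub_zero] at hbadineq
      simp at hbadineq
    · exact h
  have hn₀R : R ≤ (n₀:ℝ) := le_trans (Nat.le_ceil R) (Nat.cast_le.mpr hn₀M)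
  have hRpos0 : (0:ℝ) < 4/(ε*δ) := by positivity
  have hn₀big : (N₁:ℝ) + 4/(ε*δ) + 1 ≤ (3*ε*δ/4) * (n₀:ℝ) := by
    have h1 : (3*ε*δ/4) * R = (N₁:ℝ) + 4/(ε*δ) + 1 := by
      rw [hR]; field_simp
    linarith [mul_le_mul_of_nonneg_left hn₀R (by positivity : (0:ℝ) ≤ 3*ε*δ/4)]
  set m₀ : ℕ := n₀ - v₀ with hm₀
  have hm₀n : m₀ ≤ n₀ := Nat.sub_le n₀ v₀
  have hm₀cast : (m₀:ℝ) = (n₀:ℝ) - v₀ := by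
    rw [hm₀, Nat.cast_sub hv₀n]
  -- the argmin
  obtain ⟨p, hpmem, hpmin⟩ := Finset.exists_min_image (Finset.Icc m₀ n₀)
    (fun k => count A k - (c - ε/4)*(k:ℝ))
    ⟨m₀, Finset.mem_Icc.mpr ⟨le_refl _, hm₀n⟩⟩
  rw [Finset.mem_Icc] at hpmem
  obtain ⟨hpm₀, hpn₀⟩ := hpmem
  have hmin' : ∀ k, m₀ ≤ k → k ≤ n₀ →
      count A p - (c - ε/4)*(p:ℝ) ≤ count A k - (c - ε/4)*(k:ℝ) := by
    intro k h1 h2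
    exact hpmin k (Finset.mem_Icc.mpr ⟨h1, h2⟩)
  have hpm₀cast : (m₀:ℝ) ≤ (p:ℝ) := Nat.cast_le.mpr hpm₀
  have hpn₀cast : (p:ℝ) ≤ (n₀:ℝ) := Nat.cast_le.mpr hpn₀
  have hpa := hmin' n₀ hm₀n (le_refl _)
  have hcm : count A m₀ ≤ count A p := count_mono A hpm₀
  have hpm₀R : (3*ε/4)*v₀ < (p:ℝ) - m₀ := by
    have hkey : (c - ε/4) * ((n₀:ℝ) - p) < (c - ε/4)*v₀ - (3*ε/4)*v₀ := by
      have hexp : (c - ε/4) * ((n₀:ℝ) - p) = ((c - ε/4)*(n₀:ℝ)) - ((c - ε/4)*(p:ℝ)) := by ring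
      rw [hexp]
      linarith [hbadineq, hpa, hcm]
    have hmul : (c - ε/4) * ((p:ℝ) - m₀) ≤ 1 * ((p:ℝ) - m₀) :=
      mul_le_mul_of_nonneg_right (by linarith) (by linarith)
    have hexp2 : (c - ε/4) * ((p:ℝ) - m₀)
        = (c - ε/4)*v₀ - (c - ε/4) * ((n₀:ℝ) - p) := by
      rw [hm₀cast]; ring
    linarith
  set w : ℕ := p - m₀ with hw
  have hwcast : (w:ℝ) = (p:ℝ) - m₀ := by rw [hw, Nat.cast_sub hpm₀]
  have hwp : w ≤ p := Nat.sub_le p m₀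
  -- p is large
  have hppos : (3*ε*δ/4) * (n₀:ℝ) < (p:ℝ) := by
    have h1 : δ * (n₀:ℝ) ≤ v₀ := hv₀δ
    have h2 : (3*ε/4)*(δ*(n₀:ℝ)) ≤ (3*ε/4)*v₀ := by
      apply mul_le_mul_of_nonneg_left h1 (by positivity)
    have h3 : (m₀:ℝ) ≥ 0 := Nat.cast_nonneg m₀
    linarith
  have hpN₁ : N₁ ≤ p := by
    have h0 : (N₁:ℝ) < p := by linarith
    exact_mod_cast le_of_lt h0
  have hpgε : 4/(ε*δ) ≤ (p:ℝ) := by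
    have h0 : (0:ℝ) ≤ N₁ := Nat.cast_nonneg N₁
    linarith
  have hp1 : 1 ≤ p := by
    have h0 : (0:ℝ) < p := lt_of_le_of_lt (by positivity) hppos
    have h1 : 0 < p := by exact_mod_cast h0
    omega
  have hv₀pos : (0:ℝ) < v₀ := by exact_mod_cast hv₀1
  have hw1 : 1 ≤ w := by
    have h0 : (0:ℝ) < (w:ℝ) := by rw [hwcast]; nlinarith
    have : 0 < w := by exact_mod_cast h0
    omega
  -- suffix bounds at the argmin p
  have hsuffix : ∀ v : ℕ, 1 ≤ v → v ≤ w → count A p - count A (p - v) ≤ (c - ε/4)*v := by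
    intro v h1 h2
    have hmem : p - v ∈ Finset.Icc m₀ n₀ := by
      rw [Finset.mem_Icc]
      omega
    rw [Finset.mem_Icc] at hmem
    have hmin := hmin' (p-v) hmem.1 hmem.2
    have hcast : ((p-v:ℕ):ℝ) = (p:ℝ) - v := Nat.cast_sub (by omega)
    rw [hcast] at hmin
    linarith
  -- Abel upper bound on the window (p-w, p]
  have habel := abel_upper (chiFun A) (fun k : ℕ => (k:ℝ)^α) (Nat.sub_le p w) (c-ε/4) 0
      (weight_mono hα) (Real.rpow_nonneg (Nat.cast_nonneg _) α) (le_refl 0) ?_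
  swap
  · intro v h1 h2
    rw [show p - (p - w) = w by omega] at h2
    have := hsuffix v h1 h2
    rw [count_diff A (Nat.sub_le p v)] at this
    simpa using this
  have hZdiff := sum_Ioc_weight (α := α) (Nat.sub_le p w)
  have hAdiff := aSum_diff A α (Nat.sub_le p w)
  have hAle : aSum A α (p-w) ≤ aSum Set.univ α (p-w) := aSum_le_univ A α (p-w)
  set Zp := aSum Set.univ α p with hZp
  set Zpw := aSum Set.univ α (p-w) with hZpw
  have hstep : aSum A α p ≤ (c-ε/4)*(Zp - Zpw) + Zpw := by
    rw [hZdiff] at habel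
    simp only [mul_zero, add_zero, zero_mul] at habel
    linarith
  -- Zpw is tiny compared to Zp
  have hqcast : ((p-w:ℕ):ℝ) = (p:ℝ) - w := Nat.cast_sub hwp
  have hwbig : (3*ε*δ/4)*(p:ℝ) ≤ (w:ℝ) := by
    have h2 : (3*ε/4)*(δ*(n₀:ℝ)) ≤ (3*ε/4)*(v₀:ℝ) :=
      mul_le_mul_of_nonneg_left hv₀δ (by positivity)
    have h3 : (3*ε*δ/4)*(p:ℝ) ≤ (3*ε*δ/4)*(n₀:ℝ) :=
      mul_le_mul_of_nonneg_left hpn₀cast (by positivity)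
    rw [hwcast]
    linarith
  have hεδp : 1 ≤ (ε*δ/4)*(p:ℝ) := by
    have h0 : (0:ℝ) < ε*δ := by positivity
    rw [div_le_iff₀ h0] at hpgε
    linarith
  have hq : ((p-w:ℕ):ℝ) + 1 ≤ (1 - ε*δ/2) * p := by
    rw [hqcast]
    have hexp3 : (1 - ε*δ/2) * (p:ℝ) = (p:ℝ) - ((ε*δ/4)*(p:ℝ) + (ε*δ/4)*(p:ℝ)) := by ring
    rw [hexp3]
    have : (ε*δ/4)*(p:ℝ) + (ε*δ/4)*(p:ℝ) + 1 ≤ (3*ε*δ/4)*(p:ℝ) := by linarith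
    linarith
  have hbase : (0:ℝ) ≤ ((p-w:ℕ):ℝ) + 1 := by positivity
  have hεδ1 : ε*δ ≤ 1 := by nlinarith
  have hx1 : ε*δ/2 ≤ 1 := by linarith
  have hx0 : (0:ℝ) ≤ ε*δ/2 := by positivity
  have hexp : Real.exp (-((α+1)*(ε*δ/2))) ≤ ε/16 := by
    have h1 : Real.log (16/ε) ≤ (α+1)*(ε*δ/2) := by linarith
    have h2 : Real.exp (-((α+1)*(ε*δ/2))) ≤ Real.exp (-(Real.log (16/ε))) := by
      apply Real.exp_le_exp.mpr
      linarith
    have h3 : Real.exp (-(Real.log (16/ε))) = ε/16 := by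
      rw [Real.exp_neg, Real.exp_log (by positivity), inv_div]
    linarith
  have hkey : (((p-w:ℕ):ℝ) + 1)^(α+1) ≤ (ε/16) * (p:ℝ)^(α+1) := by
    calc (((p-w:ℕ):ℝ) + 1)^(α+1) ≤ ((1 - ε*δ/2) * p)^(α+1) :=
          Real.rpow_le_rpow hbase hq (by linarith)
      _ = (1 - ε*δ/2)^(α+1) * (p:ℝ)^(α+1) :=
          Real.mul_rpow (by linarith) (Nat.cast_nonneg p)
      _ ≤ Real.exp (-((α+1)*(ε*δ/2))) * (p:ℝ)^(α+1) := by
          apply mul_le_mul_of_nonneg_right _ (Real.rpow_nonneg (Nat.cast_nonneg p) _)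
          exact one_sub_rpow_le_exp hx0 hx1 (by linarith)
      _ ≤ (ε/16) * (p:ℝ)^(α+1) := by
          apply mul_le_mul_of_nonneg_right hexp (Real.rpow_nonneg (Nat.cast_nonneg p) _)
  have hZpwsmall : Zpw ≤ (ε/16) * Zp := by
    have h1 : (α+1) * Zpw ≤ (((p-w:ℕ):ℝ)+1)^(α+1) := NsumUB hα (p-w)
    have h2 : (p:ℝ)^(α+1) ≤ (α+1) * Zp := NsumLB hα p
    have h3 : (0:ℝ) < α+1 := by linarith
    have h4 : (ε/16)*((p:ℝ)^(α+1)) ≤ (ε/16)*((α+1)*Zp) :=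
      mul_le_mul_of_nonneg_left h2 (by positivity)
    have h5 : (α+1) * Zpw ≤ (α+1) * ((ε/16)*Zp) := by
      have h6 : (ε/16)*((α+1)*Zp) = (α+1)*((ε/16)*Zp) := by ring
      rw [h6] at h4
      linarith
    exact le_of_mul_le_mul_left h5 h3
  -- contradiction with the α-density lower bound at p
  have hlow := hN₁ p hpN₁
  have hZppos : 0 < Zp := aSum_univ_pos α hp1
  have hZpwpos : 0 ≤ Zpw := aSum_nonneg Set.univ α (p-w)
  have hfin1 : 0 ≤ (c - ε/4) * Zpw := mul_nonneg (by linarith) hZpwpos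
  have hfin2 : 0 < ε * Zp := mul_pos hε hZppos
  have hexp4 : (c-ε/4)*(Zp - Zpw) = (c-ε/4)*Zp - (c-ε/4)*Zpw := by ring
  rw [hexp4] at hstep
  have hexp5 : (c-ε/8)*Zp = (c-ε/4)*Zp + (ε*Zp)/8 := by ring
  rw [hexp5] at hlow
  have hexp6 : (ε/16)*Zp = (ε*Zp)/16 := by ring
  rw [hexp6] at hZpwsmall
  linarith

end Stmt9
namespace Stmt9

open Finset Filter

lemma count_add_compl (X : Set ℕ) (n : ℕ) : count X n + count Xᶜ n = n := by
  rw [count, count, ← Finset.sum_add_distrib]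
  have : ∀ k ∈ Finset.Icc 1 n, chiFun X k + chiFun Xᶜ k = 1 := fun k _ => chiFun_add_compl X k
  rw [Finset.sum_congr rfl this]
  simp

lemma hasDensity_compl {X : Set ℕ} {d : ℝ} (hX : HasDensity X d) : HasDensity Xᶜ (1-d) := by
  rw [HasDensity] at hX ⊢
  have h1 : Tendsto (fun n : ℕ => (1:ℝ)) atTop (𝓝 1) := tendsto_const_nhds
  have h2 : ∀ᶠ n : ℕ in atTop, (1:ℝ) - count X n / n = count Xᶜ n / n := by
    filter_upwards [eventually_gt_atTop 0] with n hn
    have hne : (n:ℝ) ≠ 0 := by positivity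
    have := count_add_compl X n
    field_simp
    linarith
  have h3 := Tendsto.sub h1 hX
  exact Tendsto.congr' h2 h3

lemma density_mem_Icc {X : Set ℕ} {d : ℝ} (hX : HasDensity X d) : 0 ≤ d ∧ d ≤ 1 := by
  constructor
  · apply ge_of_tendsto hX
    filter_upwards [eventually_gt_atTop 0] with n hn
    have : (0:ℝ) < n := by exact_mod_cast hn
    exact div_nonneg (count_nonneg X n) (le_of_lt this)
  · apply le_of_tendsto hX
    filter_upwards [eventually_gt_atTop 0] with n hn
    have h0 : (0:ℝ) < n := by exact_mod_cast hn
    rw [div_le_one h0]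
    exact count_le X n

lemma abs_count_bound {X : Set ℕ} {d : ℝ} (hX : HasDensity X d) {ε' : ℝ} (hε' : 0 < ε') :
    ∃ C : ℝ, 0 ≤ C ∧ ∀ m : ℕ, |count X m - d*m| ≤ ε'*m + C := by
  have h1 := Metric.tendsto_atTop.mp hX ε' hε'
  obtain ⟨N₀, hN₀⟩ := h1
  refine ⟨(N₀:ℝ)*(1 + |d|), by positivity, ?_⟩
  intro m
  rcases lt_or_ge m N₀ with hm | hm
  · have hb1 : |count X m| ≤ (m:ℝ) := by
      rw [abs_of_nonneg (count_nonneg X m)]; exact count_le X m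
    have hb2 : |d*(m:ℝ)| = |d| * m := by rw [abs_mul, Nat.abs_cast]
    have h2 : |count X m - d*m| ≤ (m:ℝ) + |d| * m := by
      calc |count X m - d*m| ≤ |count X m| + |d*(m:ℝ)| := abs_sub _ _
        _ ≤ (m:ℝ) + |d| * m := by rw [hb2]; linarith
    have h5 : (m:ℝ) ≤ N₀ := by exact_mod_cast le_of_lt hm
    have h6 : |d| * (m:ℝ) ≤ |d| * (N₀:ℝ) := mul_le_mul_of_nonneg_left h5 (abs_nonneg d)
    have h7 : 0 ≤ ε'*m := by positivity
    nlinarith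
  · rcases Nat.eq_zero_or_pos m with rfl | hmpos
    · have h0 : count X 0 = 0 := by simp [count]
      have h1 : (0:ℝ) ≤ (N₀:ℝ)*(1+|d|) := by positivity
      rw [h0, Nat.cast_zero, mul_zero, sub_zero, abs_zero, mul_zero, zero_add]
      exact h1
    have h2 := hN₀ m hm
    rw [Real.dist_eq] at h2
    have hmpos' : (0:ℝ) < m := by exact_mod_cast hmpos
    have h3' : count X m - d*m = (count X m / m - d) * m := by
      field_simp
    have h3 : |count X m - d*m| = |count X m / m - d| * m := by
      rw [h3', abs_mul, Nat.abs_cast]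
    rw [h3]
    have h4 : |count X m / m - d| * m ≤ ε' * m :=
      mul_le_mul_of_nonneg_right (le_of_lt h2) (le_of_lt hmpos')
    have h5 : 0 ≤ (N₀:ℝ)*(1+|d|) := by positivity
    linarith

lemma windows_of_density {X : Set ℕ} {d : ℝ} (hX : HasDensity X d)
    {δ ε : ℝ} (hδ : 0 < δ) (hε : 0 < ε) :
    ∀ᶠ n : ℕ in atTop, ∀ v : ℕ, δ*(n:ℝ) ≤ v → v ≤ n →
      (d - ε)*(v:ℝ) ≤ count X n - count X (n - v) := by
  obtain ⟨C, hC0, hC⟩ := abs_count_bound hX (show (0:ℝ) < ε*δ/4 by positivity)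
  have hev : ∀ᶠ n : ℕ in atTop, 2*C ≤ (ε*δ/2)*(n:ℝ) := by
    have : Tendsto (fun n : ℕ => (ε*δ/2)*(n:ℝ)) atTop atTop := by
      apply Tendsto.const_mul_atTop (by positivity)
      exact tendsto_natCast_atTop_atTop
    exact this.eventually_ge_atTop (2*C)
  filter_upwards [hev] with n hn
  intro v hv1 hv2
  have hub := hC n
  have hlb := hC (n-v)
  have hcast : ((n-v:ℕ):ℝ) = (n:ℝ) - v := Nat.cast_sub hv2
  rw [hcast] at hlb
  have h1 : count X n ≥ d*n - (ε*δ/4)*n - C := by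
    have := abs_le.mp hub
    linarith
  have h2 : count X (n-v) ≤ d*((n:ℝ)-v) + (ε*δ/4)*((n:ℝ)-v) + C := by
    have := abs_le.mp hlb
    linarith
  have h3 : (0:ℝ) ≤ (n:ℝ) - v := by
    have : (v:ℝ) ≤ n := by exact_mod_cast hv2
    linarith
  have h4 : (ε*δ/4)*((n:ℝ)-v) ≤ (ε*δ/4)*n := by
    apply mul_le_mul_of_nonneg_left _ (by positivity)
    linarith [Nat.cast_nonneg (α := ℝ) v]
  have h5 : ε*(v:ℝ) ≥ ε*δ*n := by
    have := mul_le_mul_of_nonneg_left hv1 (le_of_lt hε)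
    linarith
  linarith

end Stmt9
namespace Stmt9

open Finset Filter

lemma alpha_lower_of_windows {X : Set ℕ} {c δ α : ℝ} (hα : 0 ≤ α) (hδ : 0 < δ) (hc1 : c ≤ 1)
    (hwin : ∀ᶠ n : ℕ in atTop, ∀ v : ℕ, δ*(n:ℝ) ≤ v → v ≤ n →
      c*(v:ℝ) ≤ count X n - count X (n - v)) :
    ∀ᶠ n : ℕ in atTop, (c - δ*(α+1)) * aSum Set.univ α n ≤ aSum X α n := by
  filter_upwards [hwin, eventually_ge_atTop 1] with n hw hn1
  apply ratio_lower_of_suffix X hα hn1 (le_of_lt hδ)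
  intro v h1 h2
  rcases le_or_gt (δ*(n:ℝ)) (v:ℝ) with hv | hv
  · have := hw v hv h2
    have hδn : 0 ≤ δ*(n:ℝ) := by positivity
    linarith
  · have hmono : count X (n-v) ≤ count X n := count_mono X (Nat.sub_le n v)
    have hcv : c*(v:ℝ) ≤ (v:ℝ) := by
      have := Nat.cast_nonneg (α := ℝ) v
      nlinarith
    linarith

lemma tendsto_ratio_of_density {X : Set ℕ} {d : ℝ} (hX : HasDensity X d)
    {α : ℝ} (hα : 0 ≤ α) :
    Tendsto (fun n => aSum X α n / aSum Set.univ α n) atTop (𝓝 d) := by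
  have hd01 := density_mem_Icc hX
  have key : ∀ Y : Set ℕ, ∀ e : ℝ, HasDensity Y e → e ≤ 1 → ∀ ε : ℝ, 0 < ε →
      ∀ᶠ n : ℕ in atTop, (e - ε) * aSum Set.univ α n ≤ aSum Y α n := by
    intro Y e hY he1 ε hε
    have hα1 : (0:ℝ) < α + 1 := by linarith
    set δ : ℝ := ε/(2*(α+1)) with hδdef
    have hδ : 0 < δ := by positivity
    have hwin := windows_of_density hY hδ (show (0:ℝ) < ε/2 by positivity)
    have := alpha_lower_of_windows hα hδ (by linarith : e - ε/2 ≤ 1) hwin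
    have heq : e - ε/2 - δ*(α+1) = e - ε := by
      rw [hδdef]
      field_simp
      ring
    rw [heq] at this
    exact this
  rw [Metric.tendsto_nhds]
  intro ε hε
  have h1 := key X d hX hd01.2 (ε/2) (by positivity)
  have hXc := hasDensity_compl hX
  have h2 := key Xᶜ (1-d) hXc (by linarith [hd01.1]) (ε/2) (by positivity)
  filter_upwards [h1, h2, eventually_ge_atTop 1] with n hn1 hn2 hn3
  have hZ : 0 < aSum Set.univ α n := aSum_univ_pos α hn3
  have hsplit : aSum Xᶜ α n = aSum Set.univ α n - aSum X α n := by
    have := aSum_add_compl X α n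
    linarith
  rw [hsplit] at hn2
  -- hn2 : (1-d-ε/2) * Z ≤ Z - aSum X α n
  rw [Real.dist_eq, abs_lt]
  have hb1 : (d - ε/2) ≤ aSum X α n / aSum Set.univ α n := by
    rw [le_div_iff₀ hZ]
    linarith
  have hb2 : aSum X α n / aSum Set.univ α n ≤ d + ε/2 := by
    rw [div_le_iff₀ hZ]
    linarith
  constructor
  · linarith
  · linarith

end Stmt9
namespace Stmt9

open Finset Filter

lemma hasDensity_univ : HasDensity Set.univ 1 := by
  rw [HasDensity]
  have h : ∀ᶠ n : ℕ in atTop, count Set.univ n / (n:ℝ) = 1 := by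
    filter_upwards [eventually_ge_atTop 1] with n hn
    have h1 : count Set.univ n = n := by
      rw [count]
      have : ∀ k ∈ Finset.Icc 1 n, chiFun Set.univ k = 1 := fun k _ => chiFun_univ k
      rw [Finset.sum_congr rfl this]
      simp
    rw [h1]
    have : (n:ℝ) ≠ 0 := by
      have : (1:ℝ) ≤ n := by exact_mod_cast hn
      linarith
    field_simp
  exact Tendsto.congr' (h.mono fun n hn => hn.symm) tendsto_const_nhds

/-- Construction of a density measure from an ultrafilter limit of
`α`-weighted ratios. -/
lemma exists_density_measure_le {α : ℝ} (hα : 0 ≤ α) (A : Set ℕ) {b : ℝ}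
    (hfreq : ∃ᶠ n : ℕ in atTop, aSum A α n / aSum Set.univ α n < b) :
    ∃ μ : Set ℕ → ℝ, IsDensityMeasure μ ∧ μ A ≤ b := by
  set E : Set ℕ := {n | aSum A α n / aSum Set.univ α n < b} with hE
  have hNeBot : (atTop ⊓ 𝓟 E).NeBot := by
    rw [← frequently_mem_iff_neBot]
    exact hfreq
  obtain ⟨U, hU⟩ := Ultrafilter.exists_le (atTop ⊓ 𝓟 E)
  have hUatTop : (U : Filter ℕ) ≤ atTop := le_trans hU inf_le_left
  have hUE : E ∈ U := le_principal_iff.mp (le_trans hU inf_le_right)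
  have spec : ∀ X : Set ℕ, ∃ c : ℝ, c ∈ Set.Icc (0:ℝ) 1 ∧
      Tendsto (fun n => aSum X α n / aSum Set.univ α n) (U : Filter ℕ) (𝓝 c) := by
    intro X
    have hmem : ∀ᶠ n : ℕ in (U : Filter ℕ),
        aSum X α n / aSum Set.univ α n ∈ Set.Icc (0:ℝ) 1 := by
      have h1 : ∀ᶠ n : ℕ in atTop, aSum X α n / aSum Set.univ α n ∈ Set.Icc (0:ℝ) 1 := by
        filter_upwards [eventually_ge_atTop 1] with n hn
        have hZ : 0 < aSum Set.univ α n := aSum_univ_pos α hn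
        constructor
        · exact div_nonneg (aSum_nonneg X α n) (le_of_lt hZ)
        · rw [div_le_one hZ]
          exact aSum_le_univ X α n
      exact hUatTop h1
    have hle : ↑(Ultrafilter.map (fun n => aSum X α n / aSum Set.univ α n) U)
        ≤ 𝓟 (Set.Icc (0:ℝ) 1) := by
      rw [le_principal_iff]
      rw [Ultrafilter.mem_coe, Ultrafilter.mem_map]
      exact hmem
    obtain ⟨c, hc, hc2⟩ := (isCompact_Icc (a := (0:ℝ)) (b := 1)).ultrafilter_le_nhds
      (Ultrafilter.map (fun n => aSum X α n / aSum Set.univ α n) U) hle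
    refine ⟨c, hc, ?_⟩
    rw [Filter.Tendsto]
    rw [← Ultrafilter.coe_map]
    exact hc2
  choose μ hμIcc hμT using spec
  have hdens : ∀ X : Set ℕ, ∀ e : ℝ, HasDensity X e → μ X = e := by
    intro X e hX
    have h1 := (tendsto_ratio_of_density hX hα).mono_left hUatTop
    exact tendsto_nhds_unique (hμT X) h1
  refine ⟨μ, ⟨?_, hμIcc, ?_, hdens⟩, ?_⟩
  · intro X Y hXY
    have h1 : (fun n => aSum (X ∪ Y) α n / aSum Set.univ α n)
        = fun n => aSum X α n / aSum Set.univ α n + aSum Y α n / aSum Set.univ α n := by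
      funext n
      rw [aSum_union X Y hXY, add_div]
    have h2 := (hμT X).add (hμT Y)
    rw [← h1] at h2
    exact tendsto_nhds_unique (hμT (X ∪ Y)) h2
  · exact hdens Set.univ 1 hasDensity_univ
  · have h1 : ∀ᶠ n : ℕ in (U : Filter ℕ), aSum A α n / aSum Set.univ α n ≤ b := by
      filter_upwards [hUE] with n hn
      exact le_of_lt hn
    exact le_of_tendsto (hμT A) h1

lemma dm_nonneg {μ : Set ℕ → ℝ} (h : IsDensityMeasure μ) (X : Set ℕ) : 0 ≤ μ X :=
  (h.2.1 X).1

lemma dm_mono {μ : Set ℕ → ℝ} (h : IsDensityMeasure μ) {X Y : Set ℕ} (hXY : X ⊆ Y) :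
    μ X ≤ μ Y := by
  have h1 : Y = X ∪ (Y \ X) := by
    rw [Set.union_diff_cancel hXY]
  have h2 : Disjoint X (Y \ X) := Set.disjoint_sdiff_right
  have h3 := h.1 X (Y \ X) h2
  rw [← h1] at h3
  have h4 := dm_nonneg h (Y \ X)
  linarith

end Stmt9
namespace Stmt9

open Finset Filter

open Classical in
/-- Greedy selection counter: pick elements of `A` as long as the running count
stays below `c·n`. -/
noncomputable def greedyCnt (A : Set ℕ) (c : ℝ) : ℕ → ℕ
  | 0 => 0
  | (n+1) => greedyCnt A c n + (if (n+1) ∈ A ∧ (greedyCnt A c n : ℝ) < c*((n:ℝ)+1) then 1 else 0)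

/-- The greedy subset of `A` with target density `c`. -/
def greedySet (A : Set ℕ) (c : ℝ) : Set ℕ :=
  {k | 0 < k ∧ k ∈ A ∧ (greedyCnt A c (k-1) : ℝ) < c*(k:ℝ)}

open Classical in
lemma greedyCnt_succ (A : Set ℕ) (c : ℝ) (n : ℕ) :
    greedyCnt A c (n+1) = greedyCnt A c n
      + (if (n+1) ∈ A ∧ (greedyCnt A c n : ℝ) < c*((n:ℝ)+1) then 1 else 0) := rfl

lemma greedySet_subset (A : Set ℕ) (c : ℝ) : greedySet A c ⊆ A := fun k hk => hk.2.1

lemma greedy_count (A : Set ℕ) (c : ℝ) : ∀ n : ℕ, count (greedySet A c) n = greedyCnt A c n := by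
  intro n
  induction n with
  | zero => simp [count, greedyCnt]
  | succ n ih =>
    have hsum : count (greedySet A c) (n+1) = count (greedySet A c) n + chiFun (greedySet A c) (n+1) := by
      rw [count, count, Finset.sum_Icc_succ_top (by omega : 1 ≤ n+1)]
    rw [hsum, ih]
    have hmem : ((n+1) ∈ greedySet A c) ↔ ((n+1) ∈ A ∧ (greedyCnt A c n : ℝ) < c*((n:ℝ)+1)) := by
      rw [greedySet]
      simp only [Set.mem_setOf_eq]
      constructor
      · rintro ⟨-, h1, h2⟩
        refine ⟨h1, ?_⟩
        have : (n+1) - 1 = n := by omega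
        rw [this] at h2
        convert h2 using 2
        push_cast
        ring
      · rintro ⟨h1, h2⟩
        refine ⟨by omega, h1, ?_⟩
        have : (n+1) - 1 = n := by omega
        rw [this]
        convert h2 using 2
        push_cast
        ring
    by_cases h : (n+1) ∈ A ∧ (greedyCnt A c n : ℝ) < c*((n:ℝ)+1)
    · have h1 : chiFun (greedySet A c) (n+1) = 1 := by
        unfold chiFun
        rw [Set.indicator_of_mem (hmem.mpr h)]
        rfl
      rw [h1]
      rw [greedyCnt_succ, if_pos h]
      push_cast
      ring
    · have h1 : chiFun (greedySet A c) (n+1) = 0 := by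
        unfold chiFun
        rw [Set.indicator_of_notMem (fun hx => h (hmem.mp hx))]
      rw [h1]
      rw [greedyCnt_succ, if_neg h]
      push_cast
      ring

lemma greedy_upper (A : Set ℕ) {c : ℝ} (hc : 0 ≤ c) :
    ∀ n : ℕ, (greedyCnt A c n : ℝ) ≤ c*(n:ℝ) + 1 := by
  intro n
  induction n with
  | zero => simp [greedyCnt]
  | succ n ih =>
    rw [greedyCnt_succ]
    by_cases h : (n+1) ∈ A ∧ (greedyCnt A c n : ℝ) < c*((n:ℝ)+1)
    · rw [if_pos h]
      push_cast
      have := h.2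
      linarith
    · rw [if_neg h]
      push_cast
      have hcn : c*(n:ℝ) ≤ c*((n:ℝ)+1) := by nlinarith
      linarith

lemma greedy_step_ge (A : Set ℕ) (c : ℝ) (k : ℕ) :
    (greedyCnt A c k : ℝ) + chiFun A (k+1) ≤ greedyCnt A c (k+1)
      ∨ c*((k:ℝ)+1) - 1 ≤ (greedyCnt A c (k+1) : ℝ) := by
  rw [greedyCnt_succ]
  by_cases h : (k+1) ∈ A ∧ (greedyCnt A c k : ℝ) < c*((k:ℝ)+1)
  · left
    rw [if_pos h]
    have : chiFun A (k+1) ≤ 1 := chiFun_le_one A (k+1)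
    push_cast
    linarith
  · rcases Classical.em ((k+1) ∈ A) with hA | hA
    · -- then the cap was binding
      right
      have h2 : ¬ ((greedyCnt A c k : ℝ) < c*((k:ℝ)+1)) := fun hx => h ⟨hA, hx⟩
      push_neg at h2
      rw [if_neg h]
      push_cast
      linarith
    · left
      have h1 : chiFun A (k+1) = 0 := by
        unfold chiFun
        rw [Set.indicator_of_notMem hA]
      rw [h1, if_neg h]
      simp

lemma greedy_lower (A : Set ℕ) {c δ : ℝ} (hc0 : 0 ≤ c) (hc1 : c ≤ 1) (hδ : 0 < δ) {N : ℕ}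
    (hwin : ∀ n : ℕ, N ≤ n → ∀ v : ℕ, δ*(n:ℝ) ≤ v → v ≤ n →
      c*(v:ℝ) ≤ count A n - count A (n - v)) :
    ∀ n : ℕ, N ≤ n → c*(n:ℝ) - δ*(n:ℝ) - 1 ≤ (greedyCnt A c n : ℝ) := by
  intro n hNn
  -- the last time the count was at least c*k - 1
  set P : ℕ → Prop := fun k => c*(k:ℝ) - 1 ≤ (greedyCnt A c k : ℝ) with hP
  have hP0 : P 0 := by
    rw [hP]
    simp [greedyCnt]
  classical
  set m : ℕ := Nat.findGreatest P n with hm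
  have hPm : P m := Nat.findGreatest_spec (Nat.zero_le n) hP0
  have hmn : m ≤ n := Nat.findGreatest_le n
  have hgreat : ∀ k, m < k → k ≤ n → ¬ P k := fun k h1 h2 =>
    Nat.findGreatest_is_greatest h1 h2
  -- on (m, n] every element of A is taken greedily
  have hstep : ∀ k, m ≤ k → k ≤ n →
      (greedyCnt A c m : ℝ) + (count A k - count A m) ≤ greedyCnt A c k := by
    intro k hk1 hk2
    induction k with
    | zero =>
      have hm0 : m = 0 := by omega
      rw [hm0]
      simp
    | succ k ih =>
      rcases Nat.eq_or_lt_of_le hk1 with he | hlt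
      · rw [← he]
        simp
      · have hk1' : m ≤ k := by omega
        have hk2' : k ≤ n := by omega
        have ih' := ih hk1' hk2'
        have hcount : count A (k+1) = count A k + chiFun A (k+1) := by
          rw [count, count, Finset.sum_Icc_succ_top (by omega : 1 ≤ k+1)]
        rcases greedy_step_ge A c k with hg | hg
        · have hmono : (greedyCnt A c k : ℝ) ≤ greedyCnt A c (k+1) := by
            have hn' : greedyCnt A c k ≤ greedyCnt A c (k+1) := by
              rw [greedyCnt_succ]
              exact Nat.le_add_right _ _
            exact_mod_cast hn'
          rw [hcount]
          linarith
        · exfalso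
          apply hgreat (k+1) (by omega) hk2
          rw [hP]
          push_cast
          push_cast at hg
          linarith
  have hfinal := hstep n hmn (le_refl n)
  set v : ℕ := n - m with hv
  have hvcast : (v:ℝ) = (n:ℝ) - m := by
    rw [hv, Nat.cast_sub hmn]
  have hnv : n - v = m := by omega
  rcases le_or_gt (δ*(n:ℝ)) (v:ℝ) with hbig | hsmall
  · have hwin' := hwin n hNn v hbig (by omega)
    rw [hnv] at hwin'
    have hPm' : c*(m:ℝ) - 1 ≤ (greedyCnt A c m : ℝ) := hPm
    have hδn : 0 ≤ δ*(n:ℝ) := by positivity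
    have : c*(n:ℝ) = c*(m:ℝ) + c*(v:ℝ) := by
      rw [hvcast]; ring
    linarith
  · have hPm' : c*(m:ℝ) - 1 ≤ (greedyCnt A c m : ℝ) := hPm
    have hmono : (greedyCnt A c m : ℝ) ≤ greedyCnt A c n := by
      have h1 : count A m ≤ count A n := count_mono A hmn
      linarith [hfinal]
    have hcv : c*(v:ℝ) ≤ (v:ℝ) := by
      have := Nat.cast_nonneg (α := ℝ) v
      nlinarith
    have : c*(n:ℝ) = c*(m:ℝ) + c*(v:ℝ) := by
      rw [hvcast]; ring
    linarith

/-- If `A` has window lower bounds at level `c` at every scale, then the greedy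
subset has density exactly `c`. -/
lemma greedy_hasDensity (A : Set ℕ) {c : ℝ} (hc0 : 0 ≤ c) (hc1 : c ≤ 1)
    (hwin : ∀ δ : ℝ, 0 < δ → ∀ᶠ n : ℕ in atTop, ∀ v : ℕ, δ*(n:ℝ) ≤ v → v ≤ n →
      c*(v:ℝ) ≤ count A n - count A (n - v)) :
    HasDensity (greedySet A c) c := by
  rw [HasDensity]
  rw [Metric.tendsto_atTop]
  intro ε hε
  obtain ⟨N, hN⟩ := eventually_atTop.mp (hwin (ε/2) (by positivity))
  obtain ⟨N₂, hN₂⟩ := eventually_atTop.mp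
    ((tendsto_natCast_atTop_atTop (R := ℝ)).eventually_ge_atTop (4/ε))
  refine ⟨max (max N N₂) 1, ?_⟩
  intro n hn
  have hn1 : 1 ≤ n := le_trans (le_max_right _ 1) hn
  have hnN : N ≤ n := le_trans (le_trans (le_max_left N N₂) (le_max_left _ 1)) hn
  have hnN₂ : N₂ ≤ n := le_trans (le_trans (le_max_right N N₂) (le_max_left _ 1)) hn
  have hnpos : (0:ℝ) < n := by
    have : (1:ℝ) ≤ n := by exact_mod_cast hn1
    linarith
  have hlow := greedy_lower A hc0 hc1 (show (0:ℝ) < ε/2 by positivity) hN n hnN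
  have hup := greedy_upper A hc0 n
  have hbig : 4/ε ≤ (n:ℝ) := hN₂ n hnN₂
  rw [greedy_count, Real.dist_eq, abs_lt]
  have h1 : (1:ℝ) ≤ (ε/4)*n := by
    rw [div_le_iff₀ (by positivity : (0:ℝ) < ε)] at hbig
    linarith
  constructor
  · rw [neg_lt, neg_sub, sub_lt_comm, lt_div_iff₀ hnpos]
    linarith
  · rw [sub_lt_iff_lt_add, div_lt_iff₀ hnpos]
    linarith

end Stmt9
namespace Stmt9

open Finset Filter

lemma ratio_mem01 (A : Set ℕ) (α : ℝ) (n : ℕ) :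
    0 ≤ aSum A α n / aSum Set.univ α n ∧ aSum A α n / aSum Set.univ α n ≤ 1 := by
  rcases Nat.eq_zero_or_pos n with rfl | hn
  · have h0 : aSum A α 0 = 0 := by simp [aSum]
    rw [h0]
    norm_num
  · have hZ : 0 < aSum Set.univ α n := aSum_univ_pos α hn
    constructor
    · exact div_nonneg (aSum_nonneg A α n) (le_of_lt hZ)
    · rw [div_le_one hZ]
      exact aSum_le_univ A α n

lemma ratio_bddabove (A : Set ℕ) (α : ℝ) :
    IsBoundedUnder (· ≤ ·) atTop (fun n : ℕ => aSum A α n / aSum Set.univ α n) :=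
  isBoundedUnder_of ⟨1, fun n => (ratio_mem01 A α n).2⟩

lemma ratio_bddbelow (A : Set ℕ) (α : ℝ) :
    IsBoundedUnder (· ≥ ·) atTop (fun n : ℕ => aSum A α n / aSum Set.univ α n) :=
  isBoundedUnder_of ⟨0, fun n => (ratio_mem01 A α n).1⟩

lemma lowerADens_mem01 (A : Set ℕ) (α : ℝ) :
    0 ≤ lowerADens A α ∧ lowerADens A α ≤ 1 := by
  constructor
  · apply le_liminf_of_le ((ratio_bddabove A α).isCoboundedUnder_ge)
    exact Eventually.of_forall fun n => (ratio_mem01 A α n).1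
  · apply liminf_le_of_frequently_le
      (Frequently.of_forall fun n => (ratio_mem01 A α n).2) (ratio_bddbelow A α)

lemma lad_bddabove (A : Set ℕ) :
    IsBoundedUnder (· ≤ ·) (atTop : Filter ℝ) (lowerADens A) :=
  isBoundedUnder_of ⟨1, fun α => (lowerADens_mem01 A α).2⟩

lemma lad_bddbelow (A : Set ℕ) :
    IsBoundedUnder (· ≥ ·) (atTop : Filter ℝ) (lowerADens A) :=
  isBoundedUnder_of ⟨0, fun α => (lowerADens_mem01 A α).1⟩

lemma sInf_set_bddBelow (A : Set ℕ) :
    BddBelow {r | ∃ μ, IsDensityMeasure μ ∧ μ A = r} := by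
  refine ⟨0, ?_⟩
  rintro r ⟨μ, hμ, rfl⟩
  exact dm_nonneg hμ A

lemma sInf_set_nonempty (A : Set ℕ) :
    Set.Nonempty {r | ∃ μ, IsDensityMeasure μ ∧ μ A = r} := by
  have hlt : lowerADens A 0 < lowerADens A 0 + 1 := by linarith
  have hfreq := frequently_lt_of_liminf_lt ((ratio_bddabove A 0).isCoboundedUnder_ge) hlt
  obtain ⟨μ, hμ, hb⟩ := exists_density_measure_le (le_refl (0:ℝ)) A hfreq
  exact ⟨μ A, μ, hμ, rfl⟩

/-- Step A: `λ̲(A) ≤ d̲_α(A)` for every `α ≥ 0`. -/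
lemma lamLower_le_lowerADens (A : Set ℕ) {α : ℝ} (hα : 0 ≤ α) :
    lamLower A ≤ lowerADens A α := by
  apply le_of_forall_pos_le_add
  intro ε hε
  have hlt : lowerADens A α < lowerADens A α + ε := by linarith
  have hfreq := frequently_lt_of_liminf_lt ((ratio_bddabove A α).isCoboundedUnder_ge) hlt
  obtain ⟨μ, hμ, hb⟩ := exists_density_measure_le hα A hfreq
  have h1 : lamLower A ≤ μ A := csInf_le (sInf_set_bddBelow A) ⟨μ, hμ, rfl⟩
  linarith

/-- Window lower bounds at level `L* - εw` at every scale, where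
`L* = limsup_α d̲_α(A)`. -/
lemma windows_at_level (A : Set ℕ) {εw δ : ℝ} (h1 : 0 < εw) (h2 : εw ≤ 1)
    (hδ0 : 0 < δ) (hδ1 : δ ≤ 1) :
    ∀ᶠ n : ℕ in atTop, ∀ v : ℕ, δ*(n:ℝ) ≤ v → v ≤ n →
      (limsup (lowerADens A) atTop - εw)*(v:ℝ) ≤ count A n - count A (n - v) := by
  set L : ℝ := limsup (lowerADens A) atTop with hL
  have hL1 : L ≤ 1 := by
    apply limsup_le_of_le ((lad_bddbelow A).isCoboundedUnder_le)
    exact Eventually.of_forall fun α => (lowerADens_mem01 A α).2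
  have hlog : 0 < Real.log (16/εw) := by
    apply Real.log_pos
    rw [lt_div_iff₀ h1]
    linarith
  set B₀ : ℝ := max 0 ((2*Real.log (16/εw))/(εw*δ)) with hB₀
  have hfreq : ∃ᶠ β in (atTop : Filter ℝ), L - εw/16 < lowerADens A β := by
    apply frequently_lt_of_lt_limsup ((lad_bddbelow A).isCoboundedUnder_le)
    linarith
  obtain ⟨β, hβB, hβg⟩ := frequently_atTop.mp hfreq B₀
  have hβ0 : 0 ≤ β := le_trans (le_max_left _ _) hβB
  have hα₀ : 2*Real.log (16/εw) ≤ (β+1)*(εw*δ) := by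
    have h3 : (2*Real.log (16/εw))/(εw*δ) ≤ β := le_trans (le_max_right _ _) hβB
    have h4 : (0:ℝ) < εw*δ := by positivity
    rw [div_le_iff₀ h4] at h3
    nlinarith
  have hev : ∀ᶠ n : ℕ in atTop, (L - εw/8) * aSum Set.univ β n ≤ aSum A β n := by
    have hlt2 : L - εw/8 < lowerADens A β := by linarith
    have hev0 := eventually_lt_of_lt_liminf hlt2 (ratio_bddbelow A β)
    filter_upwards [hev0, eventually_ge_atTop 1] with n hn hn1
    have hZ : 0 < aSum Set.univ β n := aSum_univ_pos β hn1
    have := mul_le_mul_of_nonneg_right (le_of_lt hn) (le_of_lt hZ)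
    rw [div_mul_cancel₀ _ (ne_of_gt hZ)] at this
    exact this
  exact windows_of_alpha A h1 h2 hL1 hδ0 hδ1 hβ0 hα₀ hev

/-- Step B: `L* ≤ d̲_α(A)` for every `α ≥ 0`. -/
lemma limsup_le_lowerADens (A : Set ℕ) {α : ℝ} (hα : 0 ≤ α) :
    limsup (lowerADens A) atTop ≤ lowerADens A α := by
  set L : ℝ := limsup (lowerADens A) atTop with hL
  have hL1 : L ≤ 1 := by
    apply limsup_le_of_le ((lad_bddbelow A).isCoboundedUnder_le)
    exact Eventually.of_forall fun b => (lowerADens_mem01 A b).2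
  apply le_of_forall_pos_le_add
  intro ε hε
  set ε' : ℝ := min ε 1 with hε'def
  have hε'0 : 0 < ε' := lt_min hε one_pos
  have hε'1 : ε' ≤ 1 := min_le_right ε 1
  have hε'ε : ε' ≤ ε := min_le_left ε 1
  have hα1 : (0:ℝ) < α + 1 := by linarith
  set δ : ℝ := ε'/(2*(α+1)) with hδdef
  have hδ0 : 0 < δ := by positivity
  have hδ1 : δ ≤ 1 := by
    rw [hδdef, div_le_one (by positivity)]
    nlinarith
  have hwin := windows_at_level A (show (0:ℝ) < ε'/2 by positivity) (by linarith) hδ0 hδ1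
  have halpha := alpha_lower_of_windows hα hδ0
      (show L - ε'/2 ≤ 1 by linarith) hwin
  have heq : L - ε'/2 - δ*(α+1) = L - ε' := by
    rw [hδdef]
    field_simp
    ring
  rw [heq] at halpha
  have hliminf : L - ε' ≤ lowerADens A α := by
    apply le_liminf_of_le ((ratio_bddabove A α).isCoboundedUnder_ge)
    filter_upwards [halpha, eventually_ge_atTop 1] with n hn hn1
    have hZ : 0 < aSum Set.univ α n := aSum_univ_pos α hn1
    rw [le_div_iff₀ hZ]
    exact hn
  linarith

end Stmt9
namespace Stmt9

open Finset Filter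

/-- Step C: `L* ≤ λ̲(A)` via the greedy subset. -/
lemma limsup_le_lamLower (A : Set ℕ) :
    limsup (lowerADens A) atTop ≤ lamLower A := by
  set L : ℝ := limsup (lowerADens A) atTop with hL
  have hL1 : L ≤ 1 := by
    apply limsup_le_of_le ((lad_bddbelow A).isCoboundedUnder_le)
    exact Eventually.of_forall fun b => (lowerADens_mem01 A b).2
  apply le_of_forall_pos_le_add
  intro ε hε
  set ε' : ℝ := min ε 1 with hε'def
  have hε'0 : 0 < ε' := lt_min hε one_pos
  have hε'1 : ε' ≤ 1 := min_le_right ε 1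
  have hε'ε : ε' ≤ ε := min_le_left ε 1
  set c : ℝ := max (L - ε') 0 with hcdef
  have hc0 : 0 ≤ c := le_max_right _ _
  have hc1 : c ≤ 1 := max_le (by linarith) (by norm_num)
  have hwin_g : ∀ δ : ℝ, 0 < δ → ∀ᶠ n : ℕ in atTop, ∀ v : ℕ, δ*(n:ℝ) ≤ v → v ≤ n →
      c*(v:ℝ) ≤ count A n - count A (n - v) := by
    intro δ hδ
    have hδ'0 : 0 < min δ 1 := lt_min hδ one_pos
    have hδ'1 : min δ 1 ≤ 1 := min_le_right δ 1
    have hw := windows_at_level A hε'0 hε'1 hδ'0 hδ'1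
    filter_upwards [hw] with n hn
    intro v hv1 hv2
    have hv1' : (min δ 1)*(n:ℝ) ≤ v := by
      have := mul_le_mul_of_nonneg_right (min_le_left δ 1) (Nat.cast_nonneg (α := ℝ) n)
      linarith
    have hwv := hn v hv1' hv2
    rcases le_or_gt 0 (L - ε') with h | h
    · have hceq : c = L - ε' := max_eq_left h
      rw [hceq]
      exact hwv
    · have hceq : c = 0 := max_eq_right (le_of_lt h)
      rw [hceq, zero_mul]
      have := count_mono A (Nat.sub_le n v)
      linarith
  have hB := greedy_hasDensity A hc0 hc1 hwin_g
  have hmain : ∀ r ∈ {r | ∃ μ, IsDensityMeasure μ ∧ μ A = r}, c ≤ r := by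
    rintro r ⟨μ, hμ, rfl⟩
    have h1 : μ (greedySet A c) = c := hμ.2.2.2 _ c hB
    have h2 : μ (greedySet A c) ≤ μ A := dm_mono hμ (greedySet_subset A c)
    linarith
  have hc_le : c ≤ lamLower A := by
    rw [lamLower]
    exact le_csInf (sInf_set_nonempty A) hmain
  have hge : L - ε' ≤ c := le_max_left _ _
  linarith

end Stmt9
/-- For every `A ⊆ ℕ` one has `λ̲(A) = d̲_∞(A)`. -/
theorem stmt9 (A : Set ℕ) : lamLower A = dInftyLower A := by
  set L : ℝ := Filter.limsup (lowerADens A) Filter.atTop with hL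
  have h1 : ∀ α : ℝ, 0 ≤ α → lamLower A ≤ lowerADens A α :=
    fun α hα => Stmt9.lamLower_le_lowerADens A hα
  have h2 : ∀ α : ℝ, 0 ≤ α → L ≤ lowerADens A α :=
    fun α hα => Stmt9.limsup_le_lowerADens A hα
  have hliminf : Filter.liminf (lowerADens A) Filter.atTop = L := by
    apply le_antisymm
    · exact Filter.liminf_le_limsup (Stmt9.lad_bddabove A) (Stmt9.lad_bddbelow A)
    · apply Filter.le_liminf_of_le ((Stmt9.lad_bddabove A).isCoboundedUnder_ge)
      filter_upwards [Filter.eventually_ge_atTop (0:ℝ)] with α hα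
      exact h2 α hα
  have htendsto : Filter.Tendsto (lowerADens A) Filter.atTop (𝓝 L) :=
    tendsto_of_liminf_eq_limsup hliminf rfl (Stmt9.lad_bddabove A) (Stmt9.lad_bddbelow A)
  have hdI : dInftyLower A = L := by
    rw [dInftyLower]
    exact htendsto.limUnder_eq
  have hle : lamLower A ≤ L := by
    rw [← hliminf]
    apply Filter.le_liminf_of_le ((Stmt9.lad_bddabove A).isCoboundedUnder_ge)
    filter_upwards [Filter.eventually_ge_atTop (0:ℝ)] with α hα
    exact h1 α hα
  have hge : L ≤ lamLower A := Stmt9.limsup_le_lamLower A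
  rw [hdI]
  linarith
end
end

section
/- For every sequence x ∈ [0,1]^ℕ there exists a sequence x̃ ∈ {0,1}^ℕ such that x̃ − x has Cesàro mean C(x̃ − x) = 0, f_C(x) = f_C(x̃), limsup_{n→∞} Θ_{θ,n}(x) = limsup_{n→∞} Θ_{θ,n}(x̃) for every θ ∈ (0,1), and t(x) = t(x̃). -/
open Filter Topology

noncomputable section

private lemma my_limsup_le {f g : ℕ → ℝ}
    (hg : Filter.IsBoundedUnder (· ≤ ·) atTop g)
    (hf' : Filter.IsBoundedUnder (· ≥ ·) atTop f)
    (h : Tendsto (fun n => f n - g n) atTop (𝓝 0)) :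
    Filter.limsup f atTop ≤ Filter.limsup g atTop := by
  refine le_of_forall_pos_le_add fun ε hε => ?_
  have h1 : ∀ᶠ n in atTop, g n < Filter.limsup g atTop + ε/2 :=
    Filter.eventually_lt_of_limsup_lt (by linarith) hg
  have h2 : ∀ᶠ n in atTop, ‖f n - g n‖ < ε/2 :=
    NormedAddCommGroup.tendsto_nhds_zero.mp h (ε/2) (by linarith)
  refine Filter.limsup_le_of_le hf'.isCoboundedUnder_le ?_
  filter_upwards [h1, h2] with n h1 h2
  rw [Real.norm_eq_abs, abs_lt] at h2
  linarith [h2.1, h2.2]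

private lemma my_limsup_eq {f g : ℕ → ℝ}
    (hf : Filter.IsBoundedUnder (· ≤ ·) atTop f) (hf' : Filter.IsBoundedUnder (· ≥ ·) atTop f)
    (hg : Filter.IsBoundedUnder (· ≤ ·) atTop g) (hg' : Filter.IsBoundedUnder (· ≥ ·) atTop g)
    (h : Tendsto (fun n => f n - g n) atTop (𝓝 0)) :
    Filter.limsup f atTop = Filter.limsup g atTop := by
  refine le_antisymm (my_limsup_le hg hf' h) (my_limsup_le hf hg' ?_)
  have := h.neg
  simp only [neg_zero, neg_sub] at this
  exact this

/-- For every `x ∈ [0,1]^ℕ` there is a zero-one sequence `y` with `C(y - x) = 0`,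
`f_C(x) = f_C(y)`, `Θ_θ(x) = Θ_θ(y)` for all `θ ∈ (0,1)`, and `t(x) = t(y)`. -/
theorem stmt10 (x : EllInfty) (hx : ∀ n, x n ∈ Set.Icc (0 : ℝ) 1) :
    ∃ y : EllInfty, (∀ n, y n = 0 ∨ y n = 1) ∧ HasCesaro (⇑y - ⇑x) 0 ∧
      fC x = fC y ∧ (∀ θ ∈ Set.Ioo (0 : ℝ) 1, ThetaSup (⇑x) θ = ThetaSup (⇑y) θ) ∧
      tFun (⇑x) = tFun (⇑y) := by
  classical
  set S : ℕ → ℝ := fun n => ∑ i ∈ Finset.Icc 1 n, x i with hSdef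
  have hS0 : S 0 = 0 := by simp [hSdef]
  set yf : ℕ → ℝ := fun n => if n = 0 then 0 else ((⌊S n⌋ : ℝ) - (⌊S (n-1)⌋ : ℝ)) with hyfdef
  have hy01 : ∀ n, yf n = 0 ∨ yf n = 1 := by
    intro n
    match n with
    | 0 => left; simp [hyfdef]
    | Nat.succ k =>
      have hstep : S (k+1) = S k + x (k+1) := by
        simp [hSdef, Finset.sum_Icc_succ_top (Nat.one_le_iff_ne_zero.mpr (Nat.succ_ne_zero k))]
      have hx1 := hx (k+1)
      have h1 : ⌊S k⌋ ≤ ⌊S (k+1)⌋ := Int.floor_le_floor (by rw [hstep]; linarith [hx1.1])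
      have h2 : ⌊S (k+1)⌋ ≤ ⌊S k⌋ + 1 := by
        have h2' : ⌊S (k+1)⌋ ≤ ⌊S k + 1⌋ := Int.floor_le_floor (by rw [hstep]; linarith [hx1.2])
        simpa [Int.floor_add_one] using h2'
      have hval : yf (k+1) = ((⌊S (k+1)⌋ - ⌊S k⌋ : ℤ) : ℝ) := by
        simp [hyfdef]
      rcases (by omega : ⌊S (k+1)⌋ - ⌊S k⌋ = 0 ∨ ⌊S (k+1)⌋ - ⌊S k⌋ = 1) with h | h
      · left; rw [hval, h]; norm_num
      · right; rw [hval, h]; norm_num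
  have hsum : ∀ n, (∑ i ∈ Finset.Icc 1 n, yf i) = (⌊S n⌋ : ℝ) := by
    intro n
    rw [← Finset.Ico_add_one_right_eq_Icc, Finset.sum_Ico_eq_sum_range]
    have hterm : ∀ k : ℕ, yf (1+k) = (fun j => ((⌊S j⌋ : ℝ))) (k+1) - (fun j => ((⌊S j⌋ : ℝ))) k := by
      intro k
      simp [hyfdef, Nat.add_comm 1 k]
    rw [Finset.sum_congr rfl (fun k _ => hterm k), Finset.sum_range_sub (fun j => ((⌊S j⌋ : ℝ)))]
    simp [hS0]
  have hD : ∀ n, |(∑ i ∈ Finset.Icc 1 n, (yf i - x i))| ≤ 1 := by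
    intro n
    rw [Finset.sum_sub_distrib, hsum n]
    have h1 := Int.floor_le (S n)
    have h2 := Int.sub_one_lt_floor (S n)
    rw [abs_le]
    constructor <;> [linarith; linarith]
  have hmem : Memℓp yf ⊤ := by
    apply memℓp_infty
    refine ⟨1, ?_⟩
    rintro r ⟨n, rfl⟩
    rcases hy01 n with h | h <;> simp [h]
  set y : EllInfty := ⟨yf, hmem⟩ with hydef
  have hycoe : ∀ n, y n = yf n := fun n => rfl
  have hces : HasCesaro (⇑y - ⇑x) 0 := by
    unfold HasCesaro
    refine squeeze_zero_norm (a := fun n : ℕ => 1 / (n:ℝ)) ?_ tendsto_one_div_atTop_nhds_zero_nat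
    intro n
    show ‖cesaroAvg (⇑y - ⇑x) n‖ ≤ 1 / n
    have hsumeq : (∑ i ∈ Finset.Icc 1 n, (⇑y - ⇑x) i) = ∑ i ∈ Finset.Icc 1 n, (yf i - x i) := rfl
    rcases Nat.eq_zero_or_pos n with rfl | hn
    · simp [cesaroAvg]
    · have hn' : (0:ℝ) < n := by exact_mod_cast hn
      rw [cesaroAvg, hsumeq, Real.norm_eq_abs, abs_div, abs_of_pos hn']
      exact div_le_div_of_nonneg_right (hD n) hn'.le
  have hfxy : ∀ f ∈ Cesex, f x = f y := by
    intro f hf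
    have h0 : HasCesaro (⇑(y - x)) 0 := by rw [lp.coeFn_sub]; exact hces
    have hfz := hf.2 (y - x) 0 h0
    rw [map_sub] at hfz
    linarith
  -- Theta machinery
  have h1θtop : ∀ θ : ℝ, θ ∈ Set.Ioo (0:ℝ) 1 → (0:ℝ) < 1 - θ := fun θ hθ => by linarith [hθ.2]
  have hmn : ∀ (θ : ℝ), θ ∈ Set.Ioo (0:ℝ) 1 → ∀ n : ℕ, ⌊θ * n⌋₊ ≤ n := by
    intro θ hθ n
    calc ⌊θ * n⌋₊ ≤ ⌊(n:ℝ)⌋₊ :=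
          Nat.floor_le_floor (mul_le_of_le_one_left (Nat.cast_nonneg n) hθ.2.le)
      _ = n := Nat.floor_natCast n
  have hsplit : ∀ (θ : ℝ), θ ∈ Set.Ioo (0:ℝ) 1 → ∀ (f : ℕ → ℝ) (n : ℕ),
      (∑ i ∈ Finset.Icc 1 n, if θ * n < (i:ℝ) then f i else 0)
        = (∑ i ∈ Finset.Icc 1 n, f i) - ∑ i ∈ Finset.Icc 1 (⌊θ * n⌋₊), f i := by
    intro θ hθ f n
    have h0 : (0:ℝ) ≤ θ * n := mul_nonneg hθ.1.le (Nat.cast_nonneg n)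
    have e0 : (∑ i ∈ Finset.Ioc 0 (⌊θ * n⌋₊), if θ * n < (i:ℝ) then f i else 0) = 0 := by
      apply Finset.sum_eq_zero
      intro i hi
      rw [Finset.mem_Ioc] at hi
      rw [if_neg]
      intro hc
      exact absurd ((Nat.floor_lt h0).mpr hc) (not_lt.mpr hi.2)
    have e1 : (∑ i ∈ Finset.Ioc (⌊θ * n⌋₊) n, if θ * n < (i:ℝ) then f i else 0)
        = ∑ i ∈ Finset.Ioc (⌊θ * n⌋₊) n, f i := by
      apply Finset.sum_congr rfl
      intro i hi
      rw [Finset.mem_Ioc] at hi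
      rw [if_pos ((Nat.floor_lt h0).mp hi.1)]
    rw [show Finset.Icc 1 n = Finset.Ioc 0 n from Finset.Icc_add_one_left_eq_Ioc 0 n,
        show Finset.Icc 1 (⌊θ * n⌋₊) = Finset.Ioc 0 (⌊θ * n⌋₊) from Finset.Icc_add_one_left_eq_Ioc 0 _,
        ← Finset.sum_Ioc_consecutive (fun i => if θ * n < (i:ℝ) then f i else 0)
          (Nat.zero_le (⌊θ * n⌋₊)) (hmn θ hθ n),
        ← Finset.sum_Ioc_consecutive f (Nat.zero_le (⌊θ * n⌋₊)) (hmn θ hθ n),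
        e0, e1]
    ring
  have hDpair : ∀ k, |(∑ i ∈ Finset.Icc 1 k, (⇑x) i) - ∑ i ∈ Finset.Icc 1 k, (⇑y) i| ≤ 1 := by
    intro k
    have h1 := hD k
    rw [Finset.sum_sub_distrib] at h1
    have hyy : (∑ i ∈ Finset.Icc 1 k, (⇑y) i) = ∑ i ∈ Finset.Icc 1 k, yf i := rfl
    rw [abs_sub_comm, hyy]
    exact h1
  have hdiff : ∀ θ : ℝ, θ ∈ Set.Ioo (0:ℝ) 1 →
      Tendsto (fun n => Theta (⇑x) θ n - Theta (⇑y) θ n) atTop (𝓝 0) := by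
    intro θ hθ
    have h1θ := h1θtop θ hθ
    refine squeeze_zero_norm (a := fun n : ℕ => (2/(1-θ)) * (1/(n:ℝ))) ?_ ?_
    · intro n
      rcases Nat.eq_zero_or_pos n with rfl | hn
      · simp [Theta]
      have hn' : (0:ℝ) < n := by exact_mod_cast hn
      have hden : (0:ℝ) < (n:ℝ) * (1-θ) := by positivity
      rw [Theta, Theta, hsplit θ hθ (⇑x) n, hsplit θ hθ (⇑y) n, div_sub_div_same,
        Real.norm_eq_abs, abs_div, abs_of_pos hden]
      have hnum : |((∑ i ∈ Finset.Icc 1 n, (⇑x) i) - ∑ i ∈ Finset.Icc 1 (⌊θ * n⌋₊), (⇑x) i)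
          - ((∑ i ∈ Finset.Icc 1 n, (⇑y) i) - ∑ i ∈ Finset.Icc 1 (⌊θ * n⌋₊), (⇑y) i)| ≤ 2 := by
        have hh1 := hDpair n
        have hh2 := hDpair (⌊θ * n⌋₊)
        rw [abs_le] at hh1 hh2 ⊢
        constructor <;> [linarith [hh1.1, hh2.2]; linarith [hh1.2, hh2.1]]
      calc _ ≤ 2 / ((n:ℝ) * (1-θ)) := div_le_div_of_nonneg_right hnum hden.le
        _ = (2/(1-θ)) * (1/(n:ℝ)) := by field_simp
    · simpa using tendsto_one_div_atTop_nhds_zero_nat.const_mul (2/(1-θ))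
  have hThetaBdd : ∀ (θ : ℝ), θ ∈ Set.Ioo (0:ℝ) 1 → ∀ (f : ℕ → ℝ),
      (∀ i, f i ∈ Set.Icc (0:ℝ) 1) → ∀ n, Theta f θ n ∈ Set.Icc (0:ℝ) (1/(1-θ)) := by
    intro θ hθ f hf n
    have h1θ := h1θtop θ hθ
    constructor
    · apply div_nonneg
      · apply Finset.sum_nonneg
        intro i _
        split
        · exact (hf i).1
        · exact le_refl 0
      · positivity
    · rcases Nat.eq_zero_or_pos n with rfl | hn
      · have hT0 : Theta f θ 0 = 0 := by simp [Theta]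
        rw [hT0]
        exact div_nonneg zero_le_one h1θ.le
      have hn' : (0:ℝ) < n := by exact_mod_cast hn
      have hnum : (∑ i ∈ Finset.Icc 1 n, if θ * n < (i:ℝ) then f i else 0) ≤ n := by
        calc (∑ i ∈ Finset.Icc 1 n, if θ * n < (i:ℝ) then f i else 0)
            ≤ (Finset.Icc 1 n).card • (1:ℝ) := by
              apply Finset.sum_le_card_nsmul
              intro i _
              split
              · exact (hf i).2
              · norm_num
          _ = n := by simp [Nat.card_Icc]
      rw [Theta]
      calc (∑ i ∈ Finset.Icc 1 n, if θ * n < (i:ℝ) then f i else 0) / ((n:ℝ) * (1-θ))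
          ≤ (n:ℝ) / ((n:ℝ) * (1-θ)) := div_le_div_of_nonneg_right hnum (by positivity)
        _ = 1/(1-θ) := by
            rw [← div_div]
            rw [div_self (ne_of_gt hn')]
  have hxIcc : ∀ n, (⇑x) n ∈ Set.Icc (0:ℝ) 1 := hx
  have hyIcc : ∀ n, (⇑y) n ∈ Set.Icc (0:ℝ) 1 := by
    intro n
    rcases hy01 n with h | h <;> rw [hycoe n, h] <;> norm_num
  have hTheta : ∀ θ ∈ Set.Ioo (0:ℝ) 1, ThetaSup (⇑x) θ = ThetaSup (⇑y) θ := by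
    intro θ hθ
    have bx := hThetaBdd θ hθ (⇑x) hxIcc
    have by' := hThetaBdd θ hθ (⇑y) hyIcc
    exact my_limsup_eq
      (Filter.isBoundedUnder_of ⟨1/(1-θ), fun n => (bx n).2⟩)
      (Filter.isBoundedUnder_of ⟨0, fun n => (bx n).1⟩)
      (Filter.isBoundedUnder_of ⟨1/(1-θ), fun n => (by' n).2⟩)
      (Filter.isBoundedUnder_of ⟨0, fun n => (by' n).1⟩)
      (hdiff θ hθ)
  refine ⟨y, fun n => hy01 n, hces, ?_, hTheta, ?_⟩
  · unfold fC
    rw [Set.image_congr hfxy]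
  · unfold tFun limUnder
    congr 1
    apply Filter.map_congr
    have hIoo : Set.Ioo (0:ℝ) 1 ∈ 𝓝[<] (1:ℝ) := by
      rw [← Set.Ioi_inter_Iio]
      exact Filter.inter_mem (mem_nhdsWithin_of_mem_nhds (isOpen_Ioi.mem_nhds (by norm_num)))
        self_mem_nhdsWithin
    filter_upwards [hIoo] with θ hθ
    exact hTheta θ hθ
end
end

section
/- For every x ∈ ℓ∞ the limit t(x) = lim_{θ→1⁻} limsup_{n→∞} Θ_{θ,n}(x) exists as a real number, i.e., the function θ ↦ limsup_{n→∞} Θ_{θ,n}(x) converges as θ → 1 from the left. -/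
open Filter Topology

noncomputable section

/-! ### Auxiliary development for `stmt12` -/

section Aux

variable {y : ℕ → ℝ} {M θ θ' : ℝ}

lemma window_eq (hθ0 : 0 ≤ θ) (n : ℕ) :
    (∑ i ∈ Finset.Icc 1 n, if θ * n < (i : ℝ) then y i else 0)
      = ∑ i ∈ Finset.Ioc (⌊θ * n⌋₊) n, y i := by
  have h0 : (0:ℝ) ≤ θ * n := by positivity
  rw [show (1:ℕ) = 0 + 1 from rfl, Finset.Icc_add_one_left_eq_Ioc, ← Finset.sum_filter]
  congr 1
  ext i
  simp only [Finset.mem_filter, Finset.mem_Ioc]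
  constructor
  · rintro ⟨⟨h1, h2⟩, h3⟩
    exact ⟨(Nat.floor_lt h0).2 h3, h2⟩
  · rintro ⟨h1, h2⟩
    exact ⟨⟨Nat.lt_of_le_of_lt (Nat.zero_le _) h1, h2⟩, (Nat.floor_lt h0).1 h1⟩

lemma theta_window (hθ0 : 0 ≤ θ) (n : ℕ) :
    Theta y θ n = (∑ i ∈ Finset.Ioc (⌊θ * n⌋₊) n, y i) / (n * (1 - θ)) := by
  rw [Theta, window_eq hθ0]

lemma abs_sum_Ioc (hM : ∀ i, |y i| ≤ M) {a b : ℕ} (h : a ≤ b) :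
    |∑ i ∈ Finset.Ioc a b, y i| ≤ M * ((b : ℝ) - a) := by
  calc |∑ i ∈ Finset.Ioc a b, y i| ≤ ∑ i ∈ Finset.Ioc a b, |y i| :=
        Finset.abs_sum_le_sum_abs _ _
    _ ≤ ∑ _i ∈ Finset.Ioc a b, M := Finset.sum_le_sum fun i _ => hM i
    _ = ((b - a : ℕ) : ℝ) * M := by rw [Finset.sum_const, Nat.card_Ioc]; simp [mul_comm]
    _ = M * ((b : ℝ) - a) := by rw [Nat.cast_sub h]; ring

lemma M_nonneg (hM : ∀ i, |y i| ≤ M) : 0 ≤ M := (abs_nonneg _).trans (hM 0)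

lemma floor_le_self (θ : ℝ) (hθ1 : θ ≤ 1) (n : ℕ) : ⌊θ * n⌋₊ ≤ n := by
  calc ⌊θ * n⌋₊ ≤ ⌊(n : ℝ)⌋₊ := Nat.floor_mono (by nlinarith [Nat.cast_nonneg (α := ℝ) n])
    _ = n := Nat.floor_natCast n

lemma theta_abs_le (hM : ∀ i, |y i| ≤ M) (hθ0 : 0 ≤ θ) (hθ1 : θ < 1) (n : ℕ) :
    |Theta y θ n| ≤ M / (1 - θ) := by
  have hM0 : 0 ≤ M := M_nonneg hM
  have h1θ : (0:ℝ) < 1 - θ := by linarith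
  rcases Nat.eq_zero_or_pos n with rfl | hn
  · simp only [Theta, Nat.cast_zero, zero_mul, div_zero, abs_zero]
    positivity
  · have hnR : (0:ℝ) < n := by exact_mod_cast hn
    have hd : (0:ℝ) < (n : ℝ) * (1 - θ) := by nlinarith
    rw [theta_window hθ0, abs_div, abs_of_pos hd, div_le_div_iff₀ hd h1θ]
    have h1 : |∑ i ∈ Finset.Ioc (⌊θ * n⌋₊) n, y i| ≤ M * n := by
      refine (abs_sum_Ioc hM (floor_le_self θ hθ1.le n)).trans ?_
      have : (0:ℝ) ≤ (⌊θ * n⌋₊ : ℝ) := Nat.cast_nonneg _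
      nlinarith
    nlinarith [abs_nonneg (∑ i ∈ Finset.Ioc (⌊θ * n⌋₊) n, y i)]

lemma theta_bddAbove (hM : ∀ i, |y i| ≤ M) (hθ0 : 0 ≤ θ) (hθ1 : θ < 1) :
    IsBoundedUnder (· ≤ ·) atTop (Theta y θ) :=
  isBoundedUnder_of_eventually_le (a := M / (1 - θ)) (Eventually.of_forall fun (n : ℕ) =>
    (le_abs_self _).trans (theta_abs_le hM hθ0 hθ1 n))

lemma theta_bddBelow (hM : ∀ i, |y i| ≤ M) (hθ0 : 0 ≤ θ) (hθ1 : θ < 1) :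
    IsBoundedUnder (· ≥ ·) atTop (Theta y θ) :=
  isBoundedUnder_of_eventually_ge (a := -(M / (1 - θ))) (Eventually.of_forall fun (n : ℕ) => by
    have h1 := theta_abs_le hM hθ0 hθ1 n
    have h2 := neg_abs_le (Theta y θ n)
    linarith)

lemma theta_ev_abs (hM : ∀ i, |y i| ≤ M) (hθ0 : 0 ≤ θ) (hθ1 : θ < 1) {δ : ℝ} (hδ : 0 < δ) :
    ∀ᶠ n in atTop, |Theta y θ n| ≤ M + δ := by
  have hM0 : 0 ≤ M := M_nonneg hM
  have h1θ : (0:ℝ) < 1 - θ := by linarith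
  have ht : Tendsto (fun n : ℕ => (M / (1 - θ)) / (n : ℝ)) atTop (𝓝 0) :=
    tendsto_const_div_atTop_nhds_zero_nat _
  have hev : ∀ᶠ n : ℕ in atTop, (M / (1 - θ)) / (n : ℝ) ≤ δ :=
    ht.eventually (eventually_le_nhds hδ)
  filter_upwards [hev, eventually_ge_atTop 1] with n h1 h2
  have hnR : (0:ℝ) < n := by exact_mod_cast h2
  have hd : (0:ℝ) < (n : ℝ) * (1 - θ) := by nlinarith
  rw [theta_window hθ0, abs_div, abs_of_pos hd, div_le_iff₀ hd]
  have hfl : θ * n - 1 < (⌊θ * n⌋₊ : ℝ) := Nat.sub_one_lt_floor _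
  have h1' : |∑ i ∈ Finset.Ioc (⌊θ * n⌋₊) n, y i| ≤ M * ((n : ℝ) * (1 - θ) + 1) := by
    refine (abs_sum_Ioc hM (floor_le_self θ hθ1.le n)).trans ?_
    nlinarith
  have hM' : M ≤ δ * ((1 - θ) * n) := by
    rw [div_div, div_le_iff₀ (by nlinarith : (0:ℝ) < (1 - θ) * n)] at h1
    linarith
  nlinarith

lemma thetaSup_le_M (hM : ∀ i, |y i| ≤ M) (hθ0 : 0 ≤ θ) (hθ1 : θ < 1) :
    ThetaSup y θ ≤ M := by
  refine le_of_forall_pos_le_add fun δ hδ => ?_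
  refine limsup_le_of_le ((theta_bddBelow hM hθ0 hθ1).isCoboundedUnder_le) ?_
  filter_upwards [theta_ev_abs hM hθ0 hθ1 hδ] with n h
  exact (le_abs_self _).trans h

lemma neg_M_le_thetaSup (hM : ∀ i, |y i| ≤ M) (hθ0 : 0 ≤ θ) (hθ1 : θ < 1) :
    -M ≤ ThetaSup y θ := by
  refine le_of_forall_sub_le fun δ hδ => ?_
  refine le_limsup_of_frequently_le ?_ (theta_bddAbove hM hθ0 hθ1)
  refine ((theta_ev_abs hM hθ0 hθ1 hδ).mono fun n h => ?_).frequently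
  have := neg_abs_le (Theta y θ n)
  linarith

end Aux

section Chain

variable {y : ℕ → ℝ} {M θ θ' : ℝ}

/-- Partial sums. -/
def psum (y : ℕ → ℝ) (m : ℕ) : ℝ := ∑ i ∈ Finset.Ioc 0 m, y i

/-- The chain `n, ⌊θ'n⌋, ⌊θ'⌊θ'n⌋⌋, …`. -/
def chainSeq (θ' : ℝ) (n : ℕ) : ℕ → ℕ
  | 0 => n
  | (k + 1) => ⌊θ' * (chainSeq θ' n k : ℝ)⌋₊

lemma step_mul_le {c u s : ℝ} (h1 : u ≤ c) (h2 : c ≤ u + 1) : u * s ≤ c * s + |s| := by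
  rcases abs_cases s with ⟨hs, hs'⟩ | ⟨hs, hs'⟩ <;> nlinarith

lemma interval_mul_le {u v w s : ℝ} (h1 : v ≤ u) (h2 : u ≤ v + w) (hw : 0 ≤ w) :
    u * s ≤ v * s + w * |s| := by
  rcases abs_cases s with ⟨hs, hs'⟩ | ⟨hs, hs'⟩ <;> nlinarith

set_option maxHeartbeats 1000000 in
lemma chain_bound (hM : ∀ i, |y i| ≤ M) (hθ : 0 < θ) (hθθ' : θ ≤ θ') (hθ'1 : θ' < 1)
    {s : ℝ} {N C : ℕ} (hN : ∀ m : ℕ, N ≤ m → Theta y θ' m ≤ s) (hC : θ' ^ C < θ)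
    {n : ℕ} (hn : (N : ℝ) + 2 ≤ θ * n) :
    Theta y θ n ≤ s + (((n : ℝ) * (1 - θ') + 1) * (|s| + M) + C * |s|) / ((n : ℝ) * (1 - θ)) := by
  have hM0 : 0 ≤ M := M_nonneg hM
  have hθ'0 : 0 < θ' := lt_of_lt_of_le hθ hθθ'
  have hθ1 : θ < 1 := lt_of_le_of_lt hθθ' hθ'1
  have hs0 : 0 ≤ |s| := abs_nonneg s
  -- n is large
  have hn1 : 1 ≤ n := by
    by_contra h
    push_neg at h
    interval_cases n
    simp only [Nat.cast_zero, mul_zero] at hn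
    have : (0:ℝ) ≤ N := Nat.cast_nonneg N
    linarith
  have hnR : (0:ℝ) < n := by exact_mod_cast hn1
  set b := ⌊θ * n⌋₊ with hb_def
  have hθn0 : (0:ℝ) ≤ θ * n := by positivity
  have hbθn : (b : ℝ) ≤ θ * n := Nat.floor_le hθn0
  have hbθn' : θ * n < (b : ℝ) + 1 := Nat.lt_floor_add_one _
  have hbR : (N : ℝ) + 1 ≤ (b : ℝ) := by
    have := Nat.sub_one_lt_floor (θ * n)
    linarith
  have hbN : N + 1 ≤ b := by exact_mod_cast hbR
  have hbn : b < n := by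
    have h2 : (0:ℝ) < (n : ℝ) * (1 - θ) := mul_pos hnR (by linarith)
    have : (b : ℝ) < n := by nlinarith
    exact_mod_cast this
  -- the chain
  set g : ℕ → ℕ := chainSeq θ' n with hg_def
  have hg0 : g 0 = n := rfl
  have hgs : ∀ k, g (k + 1) = ⌊θ' * (g k : ℝ)⌋₊ := fun _ => rfl
  have hgsR : ∀ k, (g (k + 1) : ℝ) ≤ θ' * g k := fun k => by
    rw [hgs]; exact Nat.floor_le (by positivity)
  have hgsR' : ∀ k, θ' * g k - 1 < (g (k + 1) : ℝ) := fun k => by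
    rw [hgs]; exact Nat.sub_one_lt_floor _
  have hgmono : ∀ k, g (k + 1) ≤ g k := fun k => by
    have h1 : (g (k + 1) : ℝ) ≤ g k :=
      le_trans (hgsR k) (mul_le_of_le_one_left (Nat.cast_nonneg _) hθ'1.le)
    exact_mod_cast h1
  have hex : ∃ k, g k ≤ b := by
    by_contra h
    push_neg at h
    have hdec : ∀ k, g k + k ≤ n := by
      intro k
      induction k with
      | zero => simp [hg0]
      | succ k ih =>
        have h1 : g (k + 1) < g k := by
          have hgk : (1:ℝ) ≤ g k := by
            have : 1 ≤ g k := le_trans (by omega) (h k)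
            exact_mod_cast this
          have h2 : (0:ℝ) < (1 - θ') * g k := mul_pos (by linarith) (by linarith)
          have h3 : (g (k + 1) : ℝ) < g k := by linarith [hgsR k]
          exact_mod_cast h3
        omega
    have := hdec (n + 1)
    have := h (n + 1)
    omega
  have hgj0 : g (Nat.find hex) ≤ b := Nat.find_spec hex
  have hjne : Nat.find hex ≠ 0 := by
    intro h
    rw [h, hg0] at hgj0
    omega
  obtain ⟨j', hjeq⟩ : ∃ j', Nat.find hex = j' + 1 :=
    ⟨Nat.find hex - 1, (Nat.succ_pred_eq_of_pos (Nat.pos_of_ne_zero hjne)).symm⟩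
  have hgj : g (j' + 1) ≤ b := by rw [← hjeq]; exact hgj0
  have hjlt : ∀ k, k < j' + 1 → b < g k := fun k hk => by
    have h2 : k < Nat.find hex := by omega
    have := Nat.find_min hex h2
    omega
  clear hgj0 hjne hjeq hex
  have hgN : ∀ k, k < j' + 1 → (N ≤ g k ∧ 1 ≤ g k) := fun k hk => by
    have := hjlt k hk
    omega
  -- partial sums
  set P : ℕ → ℝ := psum y with hP_def
  have hPdiff : ∀ a c : ℕ, a ≤ c → P c - P a = ∑ i ∈ Finset.Ioc a c, y i := by
    intro a c hac
    have := Finset.sum_Ioc_consecutive y (Nat.zero_le a) hac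
    simp only [hP_def, psum]
    linarith
  -- each chain step
  have step1' : ∀ k, k < j' + 1 → P (g k) - P (g (k + 1)) ≤ ((g k : ℝ) * (1 - θ')) * s := by
    intro k hk
    obtain ⟨hkN, hk1⟩ := hgN k hk
    have hgkR : (1:ℝ) ≤ (g k : ℝ) := by exact_mod_cast hk1
    have hd : (0:ℝ) < (g k : ℝ) * (1 - θ') := mul_pos (by linarith) (by linarith)
    have heq : P (g k) - P (g (k + 1)) = ((g k : ℝ) * (1 - θ')) * Theta y θ' (g k) := by
      rw [hPdiff _ _ (hgmono k), theta_window hθ'0.le, hgs k]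
      have hne' : (1:ℝ) - θ' ≠ 0 := (by linarith : (0:ℝ) < 1 - θ').ne'
      field_simp
    rw [heq]
    exact mul_le_mul_of_nonneg_left (hN _ hkN) hd.le
  -- telescoping
  have htel : P n - P (g (j' + 1)) = ∑ k ∈ Finset.range (j' + 1), (P (g k) - P (g (k + 1))) := by
    rw [Finset.sum_range_sub' (fun k => P (g k)), hg0]
  have htel2 : ∑ k ∈ Finset.range (j' + 1), ((g k : ℝ) - g (k + 1)) = (n : ℝ) - g (j' + 1) := by
    rw [Finset.sum_range_sub' (fun k => (g k : ℝ)), hg0]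
  -- sum bound
  have hsum : ∑ k ∈ Finset.range (j' + 1), (P (g k) - P (g (k + 1)))
      ≤ ((n : ℝ) - g (j' + 1)) * s + ((j' : ℝ) + 1) * |s| := by
    have hterm : ∀ k ∈ Finset.range (j' + 1),
        P (g k) - P (g (k + 1)) ≤ ((g k : ℝ) - g (k + 1)) * s + |s| := by
      intro k hk
      rw [Finset.mem_range] at hk
      refine (step1' k hk).trans ?_
      refine step_mul_le ?_ ?_
      · linarith [hgsR k]
      · linarith [hgsR' k]
    calc ∑ k ∈ Finset.range (j' + 1), (P (g k) - P (g (k + 1)))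
        ≤ ∑ k ∈ Finset.range (j' + 1), (((g k : ℝ) - g (k + 1)) * s + |s|) :=
          Finset.sum_le_sum hterm
      _ = (∑ k ∈ Finset.range (j' + 1), ((g k : ℝ) - g (k + 1))) * s + ((j' : ℝ) + 1) * |s| := by
          rw [Finset.sum_add_distrib, ← Finset.sum_mul, Finset.sum_const, Finset.card_range]
          push_cast
          ring
      _ = ((n : ℝ) - g (j' + 1)) * s + ((j' : ℝ) + 1) * |s| := by rw [htel2]
  -- the chain has at most C steps
  have hpow : ∀ k, (g k : ℝ) ≤ θ' ^ k * n := by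
    intro k
    induction k with
    | zero => simp [hg0]
    | succ k ih =>
      calc (g (k + 1) : ℝ) ≤ θ' * g k := hgsR k
        _ ≤ θ' * (θ' ^ k * n) := mul_le_mul_of_nonneg_left ih hθ'0.le
        _ = θ' ^ (k + 1) * n := by ring
  have hgj'θn : θ * n < (g j' : ℝ) := by
    have h1 : b < g j' := hjlt j' (by omega)
    have : (b : ℝ) + 1 ≤ g j' := by exact_mod_cast h1
    linarith
  have hjC : j' + 1 ≤ C := by
    by_contra h
    push_neg at h
    have hCj : C ≤ j' := by omega
    have h1 : θ' ^ j' ≤ θ' ^ C := pow_le_pow_of_le_one hθ'0.le hθ'1.le hCj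
    have h2 : θ' ^ j' * (n : ℝ) ≤ θ' ^ C * n := mul_le_mul_of_nonneg_right h1 hnR.le
    have h3 : θ' ^ C * (n : ℝ) < θ * n := mul_lt_mul_of_pos_right hC hnR
    linarith [hpow j']
  -- bounds on the bottom of the chain
  have hgjlow : θ * θ' * n - 1 < (g (j' + 1) : ℝ) := by
    have h1 := hgsR' j'
    have h2 : θ' * (θ * n) < θ' * g j' := mul_lt_mul_of_pos_left hgj'θn hθ'0
    nlinarith
  have hgjhigh : (g (j' + 1) : ℝ) ≤ θ * n := le_trans (by exact_mod_cast hgj) hbθn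
  have hprod : (0:ℝ) ≤ (n : ℝ) * ((1 - θ) * (1 - θ')) :=
    mul_nonneg hnR.le (mul_nonneg (by linarith) (by linarith))
  -- main window-sum estimate
  have hmain : P n - P b ≤ ((n : ℝ) * (1 - θ)) * s
      + (((n : ℝ) * (1 - θ') + 1) * (|s| + M) + C * |s|) := by
    have hw0 : (0:ℝ) ≤ (n : ℝ) * (1 - θ') + 1 := by
      have : (0:ℝ) ≤ (n : ℝ) * (1 - θ') := mul_nonneg hnR.le (by linarith)
      linarith
    have hleft : P (g (j' + 1)) - P b ≤ M * ((n : ℝ) * (1 - θ') + 1) := by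
      have h1 : |P b - P (g (j' + 1))| ≤ M * ((b : ℝ) - g (j' + 1)) := by
        rw [hPdiff _ _ hgj]
        exact abs_sum_Ioc hM hgj
      have hd1 : (b : ℝ) - g (j' + 1) ≤ (n : ℝ) * (1 - θ') + 1 := by linarith
      have h2 : M * ((b : ℝ) - g (j' + 1)) ≤ M * ((n : ℝ) * (1 - θ') + 1) :=
        mul_le_mul_of_nonneg_left hd1 hM0
      have h3 := neg_abs_le (P b - P (g (j' + 1)))
      linarith
    have hmid : ((n : ℝ) - g (j' + 1)) * s ≤ ((n : ℝ) * (1 - θ)) * s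
        + ((n : ℝ) * (1 - θ') + 1) * |s| := by
      refine interval_mul_le ?_ ?_ hw0
      · linarith
      · linarith
    have hj'C : ((j' : ℝ) + 1) * |s| ≤ (C : ℝ) * |s| := by
      have h1 : ((j' : ℝ) + 1) ≤ C := by exact_mod_cast hjC
      exact mul_le_mul_of_nonneg_right h1 hs0
    have hsplit : P n - P b = (P n - P (g (j' + 1))) + (P (g (j' + 1)) - P b) := by ring
    rw [hsplit, htel]
    nlinarith [hsum, hleft, hmid, hj'C]
  -- conclude
  have hd : (0:ℝ) < (n : ℝ) * (1 - θ) := mul_pos hnR (by linarith)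
  have hTheta : Theta y θ n = (P n - P b) / ((n : ℝ) * (1 - θ)) := by
    rw [theta_window hθ.le, hPdiff b n hbn.le]
  rw [hTheta, div_le_iff₀ hd]
  calc P n - P b ≤ ((n : ℝ) * (1 - θ)) * s
      + (((n : ℝ) * (1 - θ') + 1) * (|s| + M) + C * |s|) := hmain
    _ = (s + (((n : ℝ) * (1 - θ') + 1) * (|s| + M) + C * |s|) / ((n : ℝ) * (1 - θ)))
        * ((n : ℝ) * (1 - θ)) := by rw [add_mul s, div_mul_cancel₀ _ hd.ne']; ring

end Chain

section Key

variable {y : ℕ → ℝ} {M θ θ' : ℝ}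

lemma thetaSup_key (hM : ∀ i, |y i| ≤ M) (hθ : 0 < θ) (hθθ' : θ ≤ θ') (hθ'1 : θ' < 1) :
    ThetaSup y θ ≤ ThetaSup y θ' + 2 * M * (1 - θ') / (1 - θ) := by
  have hM0 : 0 ≤ M := M_nonneg hM
  have hθ'0 : 0 < θ' := lt_of_lt_of_le hθ hθθ'
  have hθ1 : θ < 1 := lt_of_le_of_lt hθθ' hθ'1
  have h1θ : (0:ℝ) < 1 - θ := by linarith
  have h1θ' : (0:ℝ) ≤ 1 - θ' := by linarith
  have hq1 : (1 - θ') / (1 - θ) ≤ 1 := by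
    rw [div_le_one h1θ]; linarith
  have hq0 : (0:ℝ) ≤ (1 - θ') / (1 - θ) := by positivity
  refine le_of_forall_pos_le_add fun η hη => ?_
  set ε := η / 4 with hε_def
  have hε : 0 < ε := by positivity
  set s := ThetaSup y θ' + ε with hs_def
  have hsabs : |s| ≤ M + ε := by
    rw [abs_le]
    constructor
    · have := neg_M_le_thetaSup hM hθ'0.le hθ'1
      simp only [hs_def]; linarith
    · have := thetaSup_le_M hM hθ'0.le hθ'1
      simp only [hs_def]; linarith
  -- eventual upper bound for Theta θ'
  obtain ⟨N, hN⟩ : ∃ N : ℕ, ∀ m : ℕ, N ≤ m → Theta y θ' m ≤ s := by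
    have hev : ∀ᶠ m in atTop, Theta y θ' m < s :=
      eventually_lt_of_limsup_lt (by simp only [hs_def]; linarith [hε] : ThetaSup y θ' < s)
        (theta_bddAbove hM hθ'0.le hθ'1)
    obtain ⟨N, hN⟩ := eventually_atTop.mp hev
    exact ⟨N, fun m hm => (hN m hm).le⟩
  obtain ⟨C, hC⟩ : ∃ C : ℕ, θ' ^ C < θ := exists_pow_lt_of_lt_one hθ hθ'1
  -- eventual bound for Theta θ
  have hkey : ∀ᶠ n : ℕ in atTop, Theta y θ n ≤ s + (1 - θ') * (|s| + M) / (1 - θ) + ε := by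
    have htail : Tendsto (fun n : ℕ => (((|s| + M) + C * |s|) / (1 - θ)) / (n : ℝ))
        atTop (𝓝 0) := tendsto_const_div_atTop_nhds_zero_nat _
    have hev1 : ∀ᶠ n : ℕ in atTop, (((|s| + M) + C * |s|) / (1 - θ)) / (n : ℝ) ≤ ε :=
      htail.eventually (eventually_le_nhds hε)
    have hθn : Tendsto (fun n : ℕ => θ * (n : ℝ)) atTop atTop :=
      (tendsto_natCast_atTop_atTop (R := ℝ)).const_mul_atTop hθ
    have hev2 : ∀ᶠ n : ℕ in atTop, (N : ℝ) + 2 ≤ θ * n :=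
      hθn.eventually_ge_atTop ((N : ℝ) + 2)
    filter_upwards [hev1, hev2, eventually_ge_atTop 1] with n h1 h2 h3
    have hnR : (0:ℝ) < n := by exact_mod_cast h3
    have hd : (0:ℝ) < (n : ℝ) * (1 - θ) := mul_pos hnR h1θ
    refine (chain_bound hM hθ hθθ' hθ'1 hN hC h2).trans ?_
    have hsplit : (((n : ℝ) * (1 - θ') + 1) * (|s| + M) + C * |s|) / ((n : ℝ) * (1 - θ))
        = (1 - θ') * (|s| + M) / (1 - θ) + (((|s| + M) + C * |s|) / (1 - θ)) / (n : ℝ) := by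
      field_simp
      ring
    rw [hsplit]
    linarith
  have hls : ThetaSup y θ ≤ s + (1 - θ') * (|s| + M) / (1 - θ) + ε :=
    limsup_le_of_le ((theta_bddBelow hM hθ.le hθ1).isCoboundedUnder_le) hkey
  -- final arithmetic
  have harith : s + (1 - θ') * (|s| + M) / (1 - θ) + ε
      ≤ ThetaSup y θ' + 2 * M * (1 - θ') / (1 - θ) + η := by
    have he1 : (1 - θ') * (|s| + M) / (1 - θ) = ((1 - θ') / (1 - θ)) * (|s| + M) := by ring
    have he2 : 2 * M * (1 - θ') / (1 - θ) = ((1 - θ') / (1 - θ)) * (2 * M) := by ring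
    rw [he1, he2]
    have h3 : ((1 - θ') / (1 - θ)) * (|s| + M) ≤ ((1 - θ') / (1 - θ)) * (2 * M + ε) := by
      refine mul_le_mul_of_nonneg_left ?_ hq0
      linarith
    have h4 : ((1 - θ') / (1 - θ)) * (2 * M + ε) ≤ ((1 - θ') / (1 - θ)) * (2 * M) + ε := by
      have : ((1 - θ') / (1 - θ)) * (2 * M + ε) = ((1 - θ') / (1 - θ)) * (2 * M)
          + ((1 - θ') / (1 - θ)) * ε := by ring
      rw [this]
      have := mul_le_of_le_one_left hε.le hq1
      linarith
    simp only [hs_def, hε_def] at *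
    linarith
  linarith

end Key

section Final

variable {y : ℕ → ℝ} {M : ℝ}

lemma thetaSup_tendsto (hM : ∀ i, |y i| ≤ M) :
    ∃ L : ℝ, Tendsto (fun θ : ℝ => ThetaSup y θ) (𝓝[<] (1 : ℝ)) (𝓝 L) := by
  have hM0 := M_nonneg hM
  set F : ℝ → ℝ := fun θ => ThetaSup y θ with hF
  set l : Filter ℝ := 𝓝[<] (1 : ℝ) with hl
  have hne : l.NeBot := nhdsLT_neBot 1
  have hIoo : Set.Ioo (0 : ℝ) 1 ∈ l := Ioo_mem_nhdsLT (by norm_num)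
  have hevb : ∀ᶠ θ in l, |F θ| ≤ M := by
    filter_upwards [hIoo] with θ hθ
    exact abs_le.mpr ⟨neg_M_le_thetaSup hM hθ.1.le hθ.2, thetaSup_le_M hM hθ.1.le hθ.2⟩
  have hbdd1 : IsBoundedUnder (· ≤ ·) l F :=
    isBoundedUnder_of_eventually_le (a := M) (hevb.mono fun θ h => (le_abs_self _).trans h)
  have hbdd2 : IsBoundedUnder (· ≥ ·) l F :=
    isBoundedUnder_of_eventually_ge (a := -M) (hevb.mono fun θ h => by
      have := neg_abs_le (F θ); linarith)
  set L := liminf F l with hL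
  have claim1 : ∀ θ : ℝ, 0 < θ → θ < 1 → F θ ≤ L := by
    intro θ hθ0 hθ1
    refine le_of_forall_pos_le_add fun δ hδ => ?_
    have h1θ : (0 : ℝ) < 1 - θ := by linarith
    have h2M : (0 : ℝ) < 2 * M + 1 := by linarith
    set β := max θ (1 - δ * (1 - θ) / (2 * M + 1)) with hβ
    have hβ1 : β < 1 := by
      rw [hβ, max_lt_iff]
      refine ⟨hθ1, ?_⟩
      have : 0 < δ * (1 - θ) / (2 * M + 1) := by positivity
      linarith
    have hmem : Set.Ioo β 1 ∈ l := Ioo_mem_nhdsLT hβ1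
    have hev : ∀ᶠ θ' in l, F θ - δ ≤ F θ' := by
      filter_upwards [hmem] with θ' hθ'
      have hθθ' : θ ≤ θ' := le_trans (le_max_left _ _) hθ'.1.le
      have key := thetaSup_key hM hθ0 hθθ' hθ'.2
      have h2 : 1 - θ' < δ * (1 - θ) / (2 * M + 1) := by
        have := lt_of_le_of_lt (le_max_right θ (1 - δ * (1 - θ) / (2 * M + 1))) hθ'.1
        linarith
      have h3 : 2 * M * (1 - θ') / (1 - θ) ≤ δ := by
        rw [div_le_iff₀ h1θ]
        have h4 : (1 - θ') * (2 * M + 1) < δ * (1 - θ) := (lt_div_iff₀ h2M).mp h2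
        nlinarith [hθ'.2]
      simp only [hF] at key ⊢
      linarith
    have h5 : F θ - δ ≤ liminf F l := le_liminf_of_le (hbdd1.isCoboundedUnder_ge) hev
    rw [← hL] at h5
    linarith
  have claim2 : limsup F l ≤ L := by
    refine limsup_le_of_le (hbdd2.isCoboundedUnder_le) ?_
    filter_upwards [hIoo] with θ hθ
    exact claim1 θ hθ.1 hθ.2
  have claim3 : L ≤ limsup F l := liminf_le_limsup hbdd1 hbdd2
  exact ⟨L, tendsto_of_liminf_eq_limsup rfl (le_antisymm claim2 claim3) hbdd1 hbdd2⟩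

end Final


set_option synthInstance.maxHeartbeats 1000000 in
set_option maxHeartbeats 1000000 in
/-- For every `x ∈ ℓ∞` the limit `t(x) = lim_{θ→1⁻} limsup_{n→∞} Θ_{θ,n}(x)` exists. -/
theorem stmt12 (x : EllInfty) :
    ∃ L : ℝ, Tendsto (fun θ : ℝ => ThetaSup (⇑x) θ) (𝓝[<] (1 : ℝ)) (𝓝 L) := by
  have hM : ∀ i, |(⇑x) i| ≤ ‖x‖ := by
    intro i
    rw [← Real.norm_eq_abs]
    exact lp.norm_apply_le_norm ENNReal.top_ne_zero x i
  exact thetaSup_tendsto hM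
end
end
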